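/- arXiv:1402.6011 — 6 statements merged into one kernel-verified Lean document; each statement's English description precedes it below -/
import Mathlib

section
/- Fix δ > 0. (i) For every sequence p = p(n) ∈ (0,1) with p(n) → 0 and n·p(n) → ∞, one has limsup_{n→∞} φ(n, p(n), δ) / (n² p(n)² log(1/p(n))) ≤ δ^{2/3}/2 (witnessed by planting a clique on ⌈(δ^{1/3}+o(1)) p n⌉ vertices with all other weights equal to p). (ii) If moreover n·p(n)² → ∞, then limsup_{n→∞} φ(n, p(n), δ) / (n² p(n)² log(1/p(n))) ≤ min{ δ^{2/3}/2 , δ/3 } (witnessed additionally by connecting ⌈(δ/3+o(1)) p² n⌉ vertices to all other vertices with weight 1). -/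
open Real Filter
open Finset

/-- The relative entropy function `I_p(x) = x log(x/p) + (1-x) log((1-x)/(1-p))`
(with the convention `0 · log 0 = 0`, automatic since `Real.log 0 = 0`). -/
noncomputable def Ip (p x : ℝ) : ℝ :=
  x * Real.log (x / p) + (1 - x) * Real.log ((1 - x) / (1 - p))

/-- Weighted graphs on `n` vertices: symmetric, `[0,1]`-valued, zero diagonal. -/
def IsWGraph {n : ℕ} (g : Fin n → Fin n → ℝ) : Prop :=
  (∀ i j, 0 ≤ g i j ∧ g i j ≤ 1) ∧ (∀ i j, g i j = g j i) ∧ (∀ i, g i i = 0)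

/-- Triangle density `t(G) = n^{-3} ∑_{i,j,k} g_{ij} g_{jk} g_{ik}`. -/
noncomputable def triDen {n : ℕ} (g : Fin n → Fin n → ℝ) : ℝ :=
  ((n : ℝ) ^ 3)⁻¹ * ∑ i : Fin n, ∑ j : Fin n, ∑ k : Fin n, g i j * g j k * g i k

/-- Relative entropy of a weighted graph: `I_p(G) = ∑_{i<j} I_p(g_{ij})`. -/
noncomputable def entG {n : ℕ} (p : ℝ) (g : Fin n → Fin n → ℝ) : ℝ :=
  ∑ i : Fin n, ∑ j : Fin n, if i < j then Ip p (g i j) else 0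

/-- The discrete variational problem
`φ(n,p,δ) = inf { I_p(G) : G ∈ 𝒢_n, t(G) ≥ (1+δ) p³ }`. -/
noncomputable def phiDisc (n : ℕ) (p δ : ℝ) : ℝ :=
  sInf { r : ℝ | ∃ g : Fin n → Fin n → ℝ,
    IsWGraph g ∧ triDen g ≥ (1 + δ) * p ^ 3 ∧ r = entG p g }

lemma Ip_nonneg {p x : ℝ} (hp0 : 0 < p) (hp1 : p < 1) (hx0 : 0 ≤ x) (hx1 : x ≤ 1) :
    0 ≤ Ip p x := by
  unfold Ip
  rcases eq_or_lt_of_le hx0 with h0 | h0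
  · rw [← h0]
    simp only [zero_div, Real.log_zero, mul_zero, sub_zero, zero_mul, one_mul, zero_add]
    apply Real.log_nonneg
    rw [le_div_iff₀ (by linarith)]; linarith
  rcases eq_or_lt_of_le hx1 with h1 | h1
  · rw [h1]
    simp only [sub_self, zero_div, Real.log_zero, mul_zero, one_mul, add_zero, zero_mul]
    apply Real.log_nonneg
    rw [le_div_iff₀ hp0]; linarith
  have hx1' : 0 < 1 - x := by linarith
  have hl1 : Real.log (p / x) ≤ p / x - 1 := Real.log_le_sub_one_of_pos (div_pos hp0 h0)
  have hl2 : Real.log ((1 - p) / (1 - x)) ≤ (1 - p) / (1 - x) - 1 :=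
    Real.log_le_sub_one_of_pos (div_pos (by linarith) hx1')
  have e1 : Real.log (x / p) = -Real.log (p / x) := by
    rw [Real.log_div h0.ne' hp0.ne', Real.log_div hp0.ne' h0.ne']; ring
  have e2 : Real.log ((1 - x) / (1 - p)) = -Real.log ((1 - p) / (1 - x)) := by
    rw [Real.log_div hx1'.ne' (by linarith : (1:ℝ) - p ≠ 0),
      Real.log_div (by linarith : (1:ℝ) - p ≠ 0) hx1'.ne']; ring
  rw [e1, e2]
  have k1 : x * (p / x) = p := by field_simp
  have k2 : (1 - x) * ((1 - p) / (1 - x)) = 1 - p := by field_simp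
  nlinarith [mul_le_mul_of_nonneg_left hl1 hx0,
    mul_le_mul_of_nonneg_left hl2 (by linarith : (0:ℝ) ≤ 1 - x)]

lemma Ip_self {p : ℝ} (hp0 : 0 < p) (hp1 : p < 1) : Ip p p = 0 := by
  unfold Ip
  rw [div_self hp0.ne', div_self (by linarith : (1:ℝ) - p ≠ 0), Real.log_one]
  ring

lemma Ip_one (p : ℝ) : Ip p 1 = Real.log (1 / p) := by
  unfold Ip; simp


lemma entG_nonneg {n : ℕ} {p : ℝ} (hp0 : 0 < p) (hp1 : p < 1)
    {g : Fin n → Fin n → ℝ} (hg : IsWGraph g) : 0 ≤ entG p g := by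
  apply Finset.sum_nonneg; intro i _
  apply Finset.sum_nonneg; intro j _
  split
  · exact Ip_nonneg hp0 hp1 (hg.1 i j).1 (hg.1 i j).2
  · exact le_refl 0

lemma phiDisc_nonneg {n : ℕ} {p δ : ℝ} (hp0 : 0 < p) (hp1 : p < 1) :
    0 ≤ phiDisc n p δ := by
  unfold phiDisc
  rcases Set.eq_empty_or_nonempty
      { r : ℝ | ∃ g : Fin n → Fin n → ℝ,
        IsWGraph g ∧ triDen g ≥ (1 + δ) * p ^ 3 ∧ r = entG p g } with h | h
  · rw [h, Real.sInf_empty]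
  · apply Real.sInf_nonneg
    rintro r ⟨g, hg, -, rfl⟩
    exact entG_nonneg hp0 hp1 hg

lemma phiDisc_le {n : ℕ} {p δ : ℝ} (hp0 : 0 < p) (hp1 : p < 1)
    {g : Fin n → Fin n → ℝ} (hg : IsWGraph g) (ht : triDen g ≥ (1 + δ) * p ^ 3) :
    phiDisc n p δ ≤ entG p g := by
  apply csInf_le
  · exact ⟨0, by rintro r ⟨g', hg', -, rfl⟩; exact entG_nonneg hp0 hp1 hg'⟩
  · exact ⟨g, hg, ht, rfl⟩

section Counting
variable {α : Type*} [DecidableEq α]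

lemma sum_eq_ind (A B : Finset α) :
    ∑ i ∈ A, ∑ j ∈ B, (if i = j then (1:ℝ) else 0) = ((A ∩ B).card : ℝ) := by
  have : ∀ i, ∑ j ∈ B, (if i = j then (1:ℝ) else 0) = if i ∈ B then 1 else 0 := by
    intro i; rw [Finset.sum_ite_eq B i (fun _ => (1:ℝ))]
  simp_rw [this]
  rw [Finset.sum_ite_mem A B (fun _ => (1:ℝ)), Finset.sum_const, nsmul_eq_mul, mul_one]

lemma dsum_ge (A B C : Finset α) :
    (A.card : ℝ) * B.card * C.card - (A ∩ B).card * C.card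
        - (B ∩ C).card * A.card - (A ∩ C).card * B.card
      ≤ ∑ i ∈ A, ∑ j ∈ B, ∑ k ∈ C, (if i ≠ j ∧ j ≠ k ∧ i ≠ k then (1:ℝ) else 0) := by
  have key : ∀ i j k : α,
      (1:ℝ) - (if i = j then (1:ℝ) else 0) - (if j = k then (1:ℝ) else 0)
          - (if i = k then (1:ℝ) else 0)
        ≤ (if i ≠ j ∧ j ≠ k ∧ i ≠ k then (1:ℝ) else 0) := by
    intro i j k
    by_cases h1 : i = j <;> by_cases h2 : j = k <;> by_cases h3 : i = k <;>
      simp [h1, h2, h3] <;> split_ifs <;> norm_num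
  calc (A.card : ℝ) * B.card * C.card - (A ∩ B).card * C.card
        - (B ∩ C).card * A.card - (A ∩ C).card * B.card
      = ∑ i ∈ A, ∑ j ∈ B, ∑ k ∈ C,
          ((1:ℝ) - (if i = j then (1:ℝ) else 0) - (if j = k then (1:ℝ) else 0)
            - (if i = k then (1:ℝ) else 0)) := by
        simp_rw [Finset.sum_sub_distrib, Finset.sum_const, nsmul_eq_mul, mul_one,
          Finset.sum_ite_eq]
        have h1 : ∑ i ∈ A, ∑ j ∈ B, (if i = j then (1:ℝ) else 0) = ((A ∩ B).card : ℝ) :=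
          sum_eq_ind A B
        have h2 : ∑ j ∈ B, ∑ k ∈ C, (if j = k then (1:ℝ) else 0) = ((B ∩ C).card : ℝ) :=
          sum_eq_ind B C
        have h3 : ∑ i ∈ A, ∑ k ∈ C, (if i = k then (1:ℝ) else 0) = ((A ∩ C).card : ℝ) :=
          sum_eq_ind A C
        have e2 : ∑ x ∈ B, (if x ∈ C then (1:ℝ) else 0) = ((B ∩ C).card : ℝ) := by
          rw [Finset.sum_ite_mem B C (fun _ => (1:ℝ)), Finset.sum_const, nsmul_eq_mul, mul_one]
        have e3 : ∑ x ∈ A, (if x ∈ C then (1:ℝ) else 0) = ((A ∩ C).card : ℝ) := by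
          rw [Finset.sum_ite_mem A C (fun _ => (1:ℝ)), Finset.sum_const, nsmul_eq_mul, mul_one]
        simp_rw [← Finset.mul_sum]
        rw [h1, e2, e3]
        ring
    _ ≤ _ := by
        apply Finset.sum_le_sum; intro i _
        apply Finset.sum_le_sum; intro j _
        apply Finset.sum_le_sum; intro k _
        exact key i j k

end Counting

lemma half_sum {n : ℕ} (t : Fin n → Fin n → ℝ) (hsym : ∀ i j, t i j = t j i)
    (hnn : ∀ i j, 0 ≤ t i j) :
    ∑ i : Fin n, ∑ j : Fin n, (if i < j then t i j else 0)
      ≤ (∑ i : Fin n, ∑ j : Fin n, t i j) / 2 := by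
  have swap : ∑ i : Fin n, ∑ j : Fin n, (if j < i then t i j else 0)
      = ∑ i : Fin n, ∑ j : Fin n, (if i < j then t i j else 0) := by
    rw [Finset.sum_comm]
    refine Finset.sum_congr rfl fun x _ => Finset.sum_congr rfl fun y _ => ?_
    rw [hsym]
  have key : ∑ i : Fin n, ∑ j : Fin n, (if i < j then t i j else 0)
      + ∑ i : Fin n, ∑ j : Fin n, (if j < i then t i j else 0)
      ≤ ∑ i : Fin n, ∑ j : Fin n, t i j := by
    rw [← Finset.sum_add_distrib]
    simp_rw [← Finset.sum_add_distrib]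
    apply Finset.sum_le_sum; intro i _
    apply Finset.sum_le_sum; intro j _
    rcases lt_trichotomy i j with h | h | h
    · simp [h, not_lt_of_gt h]
    · subst h; simpa [lt_irrefl] using hnn i i
    · simp [h, not_lt_of_gt h]
  rw [swap] at key; linarith

lemma sum_and {n : ℕ} (S : Finset (Fin n)) (L : ℝ) :
    ∑ i : Fin n, ∑ j : Fin n, (if i ∈ S ∧ j ∈ S then L else 0)
      = (S.card : ℝ)^2 * L := by
  have inner : ∀ i : Fin n, (∑ j : Fin n, if i ∈ S ∧ j ∈ S then L else 0)
      = (if i ∈ S then (S.card : ℝ) * L else 0) := by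
    intro i; by_cases h : i ∈ S
    · simp only [h, true_and, if_pos]
      rw [Finset.sum_ite_mem Finset.univ S (fun _ => L), Finset.univ_inter,
        Finset.sum_const, nsmul_eq_mul]
    · simp [h]
  rw [Finset.sum_congr rfl (fun i _ => inner i),
    Finset.sum_ite_mem Finset.univ S (fun _ => (S.card : ℝ) * L), Finset.univ_inter,
    Finset.sum_const, nsmul_eq_mul]
  ring

lemma sum_or_le {n : ℕ} (S : Finset (Fin n)) (L : ℝ) (hL : 0 ≤ L) :
    ∑ i : Fin n, ∑ j : Fin n, (if i ∈ S ∨ j ∈ S then L else 0)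
      ≤ 2 * (S.card : ℝ) * n * L := by
  have pt : ∀ i j : Fin n, (if i ∈ S ∨ j ∈ S then L else 0)
      ≤ (if i ∈ S then L else 0) + (if j ∈ S then L else 0) := by
    intro i j
    by_cases hi : i ∈ S <;> by_cases hj : j ∈ S <;> simp [hi, hj] <;> linarith
  calc ∑ i : Fin n, ∑ j : Fin n, (if i ∈ S ∨ j ∈ S then L else 0)
      ≤ ∑ i : Fin n, ∑ j : Fin n,
          ((if i ∈ S then L else 0) + (if j ∈ S then L else 0)) := by
        apply Finset.sum_le_sum; intro i _
        apply Finset.sum_le_sum; intro j _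
        exact pt i j
    _ = 2 * (S.card : ℝ) * n * L := by
        simp_rw [Finset.sum_add_distrib, Finset.sum_const,
          Finset.sum_ite_mem Finset.univ S (fun _ => L), Finset.univ_inter,
          Finset.sum_const, nsmul_eq_mul, Finset.card_univ, Fintype.card_fin]
        rw [← Finset.mul_sum, Finset.sum_ite_mem Finset.univ S (fun _ => L),
          Finset.univ_inter, Finset.sum_const, nsmul_eq_mul]
        ring

lemma card_filter_val_lt {n m : ℕ} (h : m ≤ n) :
    (Finset.univ.filter (fun i : Fin n => (i : ℕ) < m)).card = m := by
  have : Finset.univ.filter (fun i : Fin n => (i : ℕ) < m)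
      = Finset.image (Fin.castLE h) Finset.univ := by
    ext i
    simp only [Finset.mem_filter, Finset.mem_univ, true_and, Finset.mem_image]
    constructor
    · intro hi; exact ⟨⟨(i : ℕ), hi⟩, by ext; simp⟩
    · rintro ⟨j, rfl⟩; exact lt_of_lt_of_le j.isLt (le_refl m)
  rw [this, Finset.card_image_of_injective _ (Fin.castLE_injective h), Finset.card_univ,
    Fintype.card_fin]

lemma ite_sum_push {c : Prop} [Decidable c] {β : Type*} {s : Finset β} (f : β → ℝ) :
    (if c then ∑ j ∈ s, f j else 0) = ∑ j ∈ s, (if c then f j else 0) := by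
  split <;> simp

noncomputable def cliq (n m : ℕ) (p : ℝ) : Fin n → Fin n → ℝ :=
  fun i j => if i = j then 0 else if (i : ℕ) < m ∧ (j : ℕ) < m then 1 else p

lemma cliq_isW {n m : ℕ} {p : ℝ} (hp0 : 0 ≤ p) (hp1 : p ≤ 1) : IsWGraph (cliq n m p) := by
  refine ⟨fun i j => ?_, fun i j => ?_, fun i => by simp [cliq]⟩
  · unfold cliq; split_ifs <;> constructor <;> norm_num <;> linarith
  · by_cases h : i = j
    · rw [h]
    · have h' : ¬ j = i := fun h'' => h h''.symm
      simp only [cliq, if_neg h, if_neg h']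
      by_cases h1 : (i:ℕ) < m <;> by_cases h2 : (j:ℕ) < m <;> simp [h1, h2]

noncomputable def chiD {n : ℕ} (i j k : Fin n) : ℝ :=
  if i ≠ j ∧ j ≠ k ∧ i ≠ k then 1 else 0

noncomputable def AA {n : ℕ} (m : ℕ) (i j k : Fin n) : ℝ :=
  if (i:ℕ) < m then (if (j:ℕ) < m then (if (k:ℕ) < m then chiD i j k else 0) else 0) else 0

set_option maxHeartbeats 1000000 in
lemma cliq_tri {n m : ℕ} {p : ℝ} (hp0 : 0 < p) (hp1 : p ≤ 1) (hmn : m ≤ n) :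
    p^3 * ((n:ℝ)^3 - 3*(n:ℝ)^2) + (1 - p^3) * ((m:ℝ)^3 - 3*(m:ℝ)^2)
      ≤ ∑ i : Fin n, ∑ j : Fin n, ∑ k : Fin n,
          cliq n m p i j * cliq n m p j k * cliq n m p i k := by
  classical
  have hS : ∀ (f : Fin n → ℝ),
      ∑ x ∈ Finset.univ.filter (fun i : Fin n => (i : ℕ) < m), f x
        = ∑ x : Fin n, if (x:ℕ) < m then f x else 0 :=
    fun f => Finset.sum_filter _ f
  have hcard : (((Finset.univ.filter (fun i : Fin n => (i : ℕ) < m)).card : ℕ) : ℝ) = m := by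
    rw [card_filter_val_lt hmn]
  have B1 : (n:ℝ)^3 - 3*(n:ℝ)^2
      ≤ ∑ i : Fin n, ∑ j : Fin n, ∑ k : Fin n, chiD i j k := by
    have h := dsum_ge (Finset.univ : Finset (Fin n)) Finset.univ Finset.univ
    simp only [Finset.inter_self, Finset.card_univ, Fintype.card_fin] at h
    refine le_trans (le_of_eq ?_) (le_trans h (le_of_eq ?_))
    · ring
    · simp only [chiD]
  have B2 : (m:ℝ)^3 - 3*(m:ℝ)^2
      ≤ ∑ i ∈ Finset.univ.filter (fun i : Fin n => (i : ℕ) < m),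
          ∑ j ∈ Finset.univ.filter (fun i : Fin n => (i : ℕ) < m),
          ∑ k ∈ Finset.univ.filter (fun i : Fin n => (i : ℕ) < m), chiD i j k := by
    have h := dsum_ge (Finset.univ.filter (fun i : Fin n => (i : ℕ) < m))
      (Finset.univ.filter (fun i : Fin n => (i : ℕ) < m))
      (Finset.univ.filter (fun i : Fin n => (i : ℕ) < m))
    simp only [Finset.inter_self] at h
    refine le_trans (le_of_eq ?_) (le_trans h (le_of_eq ?_))
    · rw [hcard]; ring
    · simp only [chiD]
  have Brw : ∑ i ∈ Finset.univ.filter (fun i : Fin n => (i : ℕ) < m),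
        ∑ j ∈ Finset.univ.filter (fun i : Fin n => (i : ℕ) < m),
        ∑ k ∈ Finset.univ.filter (fun i : Fin n => (i : ℕ) < m), chiD i j k
      = ∑ i : Fin n, ∑ j : Fin n, ∑ k : Fin n, AA m i j k := by
    rw [hS]
    refine Finset.sum_congr rfl fun i _ => ?_
    split_ifs with hi
    · rw [hS]
      refine Finset.sum_congr rfl fun j _ => ?_
      split_ifs with hj
      · rw [hS]
        refine Finset.sum_congr rfl fun k _ => ?_
        simp [AA, hi, hj]
      · simp [AA, hi, hj]
    · simp [AA, hi]
  have pt : ∀ i j k : Fin n,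
      p^3 * chiD i j k + (1 - p^3) * AA m i j k
        ≤ cliq n m p i j * cliq n m p j k * cliq n m p i k := by
    intro i j k
    by_cases hij : i = j
    · simp [cliq, chiD, AA, hij]
    by_cases hjk : j = k
    · simp [cliq, chiD, AA, hjk]
    by_cases hik : i = k
    · simp [cliq, chiD, AA, hik]
    have hd : chiD i j k = 1 := if_pos ⟨hij, hjk, hik⟩
    have f1 : cliq n m p i j = if (i:ℕ) < m ∧ (j:ℕ) < m then 1 else p := by
      simp [cliq, hij]
    have f2 : cliq n m p j k = if (j:ℕ) < m ∧ (k:ℕ) < m then 1 else p := by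
      simp [cliq, hjk]
    have f3 : cliq n m p i k = if (i:ℕ) < m ∧ (k:ℕ) < m then 1 else p := by
      simp [cliq, hik]
    rw [f1, f2, f3]
    simp only [AA, hd]
    by_cases hi : (i:ℕ) < m <;> by_cases hj : (j:ℕ) < m <;> by_cases hk : (k:ℕ) < m <;>
      simp only [hi, hj, hk, and_self, and_true, true_and, and_false, false_and,
        if_true, if_false, ite_true, ite_false] <;>
      nlinarith [hp0.le, hp1, sq_nonneg p, mul_pos hp0 hp0]
  have total : ∑ i : Fin n, ∑ j : Fin n, ∑ k : Fin n,
        (p^3 * chiD i j k + (1 - p^3) * AA m i j k)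
      ≤ ∑ i : Fin n, ∑ j : Fin n, ∑ k : Fin n,
          cliq n m p i j * cliq n m p j k * cliq n m p i k := by
    apply Finset.sum_le_sum; intro i _
    apply Finset.sum_le_sum; intro j _
    apply Finset.sum_le_sum; intro k _
    exact pt i j k
  have split : ∑ i : Fin n, ∑ j : Fin n, ∑ k : Fin n,
        (p^3 * chiD i j k + (1 - p^3) * AA m i j k)
      = p^3 * (∑ i : Fin n, ∑ j : Fin n, ∑ k : Fin n, chiD i j k)
        + (1 - p^3) * (∑ i : Fin n, ∑ j : Fin n, ∑ k : Fin n, AA m i j k) := by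
    simp_rw [Finset.sum_add_distrib, ← Finset.mul_sum]
  rw [split] at total
  refine le_trans ?_ total
  have h1 : (0:ℝ) ≤ p^3 := by positivity
  have h2 : (0:ℝ) ≤ 1 - p^3 := by
    have := pow_le_one₀ hp0.le hp1 (n := 3); linarith
  rw [← Brw]
  gcongr

lemma cliq_ent {n m : ℕ} {p : ℝ} (hp0 : 0 < p) (hp1 : p < 1) (hmn : m ≤ n) :
    entG p (cliq n m p) ≤ (m:ℝ)^2 * Real.log (1/p) / 2 := by
  classical
  have hL : 0 ≤ Real.log (1/p) := by
    rw [one_div, Real.log_inv]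
    have := Real.log_neg hp0 hp1
    linarith
  set S : Finset (Fin n) := Finset.univ.filter (fun i : Fin n => (i : ℕ) < m) with hSdef
  have hcard : (S.card : ℝ) = m := by rw [hSdef, card_filter_val_lt hmn]
  set t : Fin n → Fin n → ℝ := fun i j => if i = j then 0 else Ip p (cliq n m p i j) with ht
  have hW := cliq_isW (n := n) (m := m) hp0.le hp1.le
  have hsym : ∀ i j, t i j = t j i := by
    intro i j
    by_cases h : i = j
    · rw [h]
    · have h' : ¬ j = i := fun h'' => h h''.symm
      simp only [ht, if_neg h, if_neg h', hW.2.1 i j]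
  have hnn : ∀ i j, 0 ≤ t i j := by
    intro i j
    by_cases h : i = j
    · simp [ht, h]
    · simp only [ht, if_neg h]
      exact Ip_nonneg hp0 hp1 (hW.1 i j).1 (hW.1 i j).2
  have e0 : entG p (cliq n m p) = ∑ i : Fin n, ∑ j : Fin n, (if i < j then t i j else 0) := by
    unfold entG
    refine Finset.sum_congr rfl fun i _ => Finset.sum_congr rfl fun j _ => ?_
    by_cases h : i < j
    · rw [if_pos h, if_pos h, ht]
      simp only [if_neg (ne_of_lt h)]
    · rw [if_neg h, if_neg h]
  rw [e0]
  refine le_trans (half_sum t hsym hnn) ?_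
  have step : ∑ i : Fin n, ∑ j : Fin n, t i j
      ≤ ∑ i : Fin n, ∑ j : Fin n, (if i ∈ S ∧ j ∈ S then Real.log (1/p) else 0) := by
    apply Finset.sum_le_sum; intro i _
    apply Finset.sum_le_sum; intro j _
    by_cases h : i = j
    · simp only [ht, if_pos h]
      split <;> [exact hL; exact le_refl 0]
    · simp only [ht, if_neg h]
      have hmem : ∀ x : Fin n, x ∈ S ↔ (x:ℕ) < m := by
        intro x; rw [hSdef]; simp
      by_cases hC : (i:ℕ) < m ∧ (j:ℕ) < m
      · have : cliq n m p i j = 1 := by simp [cliq, h, hC]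
        rw [this, Ip_one, if_pos ⟨(hmem i).2 hC.1, (hmem j).2 hC.2⟩]
      · have : cliq n m p i j = p := by simp [cliq, h, hC]
        rw [this, Ip_self hp0 hp1]
        split <;> [exact hL; exact le_refl 0]
  have hsum := le_trans step (le_of_eq (sum_and S (Real.log (1/p))))
  rw [hcard] at hsum
  linarith

noncomputable def hub (n m : ℕ) (p : ℝ) : Fin n → Fin n → ℝ :=
  fun i j => if i = j then 0 else if (i : ℕ) < m ∨ (j : ℕ) < m then 1 else p

lemma hub_isW {n m : ℕ} {p : ℝ} (hp0 : 0 ≤ p) (hp1 : p ≤ 1) : IsWGraph (hub n m p) := by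
  refine ⟨fun i j => ?_, fun i j => ?_, fun i => by simp [hub]⟩
  · unfold hub; split_ifs <;> constructor <;> norm_num <;> linarith
  · by_cases h : i = j
    · rw [h]
    · have h' : ¬ j = i := fun h'' => h h''.symm
      simp only [hub, if_neg h, if_neg h']
      by_cases h1 : (i:ℕ) < m <;> by_cases h2 : (j:ℕ) < m <;> simp [h1, h2]

lemma sum3_filter {n : ℕ} (P Q R : Fin n → Prop) [DecidablePred P] [DecidablePred Q]
    [DecidablePred R] (f : Fin n → Fin n → Fin n → ℝ) :
    ∑ i ∈ Finset.univ.filter P, ∑ j ∈ Finset.univ.filter Q, ∑ k ∈ Finset.univ.filter R, f i j k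
      = ∑ i : Fin n, ∑ j : Fin n, ∑ k : Fin n,
          (if P i then (if Q j then (if R k then f i j k else 0) else 0) else 0) := by
  rw [Finset.sum_filter]
  refine Finset.sum_congr rfl fun i _ => ?_
  by_cases hi : P i
  · rw [if_pos hi, Finset.sum_filter]
    refine Finset.sum_congr rfl fun j _ => ?_
    by_cases hj : Q j
    · rw [if_pos hj, Finset.sum_filter]
      refine Finset.sum_congr rfl fun k _ => ?_
      by_cases hk : R k
      · rw [if_pos hk, if_pos hi, if_pos hj]
      · rw [if_neg hk, if_pos hi, if_pos hj]
    · rw [if_neg hj]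
      exact (Finset.sum_eq_zero fun k _ => by rw [if_pos hi, if_neg hj]).symm
  · rw [if_neg hi]
    exact (Finset.sum_eq_zero fun j _ =>
      Finset.sum_eq_zero fun k _ => by rw [if_neg hi]).symm

set_option maxHeartbeats 1600000 in
lemma hub_tri {n m : ℕ} {p : ℝ} (hp0 : 0 < p) (hp1 : p ≤ 1) (hmn : m ≤ n) :
    p^3 * ((n:ℝ)^3 - 3*(n:ℝ)^2)
        + 3 * (p - p^3) * ((m:ℝ)*((n:ℝ)-(m:ℝ))^2 - (m:ℝ)*((n:ℝ)-(m:ℝ)))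
      ≤ ∑ i : Fin n, ∑ j : Fin n, ∑ k : Fin n,
          hub n m p i j * hub n m p j k * hub n m p i k := by
  classical
  set S : Finset (Fin n) := Finset.univ.filter (fun i : Fin n => (i : ℕ) < m) with hSdef
  set T : Finset (Fin n) := Finset.univ.filter (fun i : Fin n => ¬ (i : ℕ) < m) with hTdef
  have hScard : (S.card : ℝ) = m := by rw [hSdef, card_filter_val_lt hmn]
  have hTcard : (T.card : ℝ) = (n:ℝ) - m := by
    have h1 : T = Finset.univ \ S := by rw [hSdef, hTdef, Finset.filter_not]
    rw [h1, Finset.card_sdiff_of_subset (Finset.filter_subset _ _)]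
    rw [Finset.card_univ, Fintype.card_fin]
    have h2 : S.card = m := by rw [hSdef, card_filter_val_lt hmn]
    rw [h2, Nat.cast_sub hmn]
  have hST : ((S ∩ T).card : ℝ) = 0 := by
    have : S ∩ T = ∅ := Finset.disjoint_iff_inter_eq_empty.mp
      (Finset.disjoint_filter_filter_not Finset.univ Finset.univ
        (fun i : Fin n => (i : ℕ) < m))
    rw [this]; simp
  have hTS : ((T ∩ S).card : ℝ) = 0 := by rw [Finset.inter_comm]; exact hST
  have B1 : (n:ℝ)^3 - 3*(n:ℝ)^2
      ≤ ∑ i : Fin n, ∑ j : Fin n, ∑ k : Fin n, chiD i j k := by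
    have h := dsum_ge (Finset.univ : Finset (Fin n)) Finset.univ Finset.univ
    simp only [Finset.inter_self, Finset.card_univ, Fintype.card_fin] at h
    refine le_trans (le_of_eq ?_) (le_trans h (le_of_eq ?_))
    · ring
    · simp only [chiD]
  have C1 : (m:ℝ)*((n:ℝ)-(m:ℝ))^2 - (m:ℝ)*((n:ℝ)-(m:ℝ))
      ≤ ∑ i ∈ S, ∑ j ∈ T, ∑ k ∈ T, chiD i j k := by
    have h := dsum_ge S T T
    rw [Finset.inter_self] at h
    refine le_trans (le_of_eq ?_) (le_trans h (le_of_eq ?_))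
    · rw [hScard, hTcard, hST]; ring
    · simp only [chiD]
  have C2 : (m:ℝ)*((n:ℝ)-(m:ℝ))^2 - (m:ℝ)*((n:ℝ)-(m:ℝ))
      ≤ ∑ i ∈ T, ∑ j ∈ S, ∑ k ∈ T, chiD i j k := by
    have h := dsum_ge T S T
    refine le_trans (le_of_eq ?_) (le_trans h (le_of_eq ?_))
    · rw [hScard, hTcard, hTS, hST, Finset.inter_self, hTcard]; ring
    · simp only [chiD]
  have C3 : (m:ℝ)*((n:ℝ)-(m:ℝ))^2 - (m:ℝ)*((n:ℝ)-(m:ℝ))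
      ≤ ∑ i ∈ T, ∑ j ∈ T, ∑ k ∈ S, chiD i j k := by
    have h := dsum_ge T T S
    refine le_trans (le_of_eq ?_) (le_trans h (le_of_eq ?_))
    · rw [hScard, hTcard, hTS, Finset.inter_self, hTcard]; ring
    · simp only [chiD]
  have R1 := sum3_filter (fun i : Fin n => (i:ℕ) < m) (fun i : Fin n => ¬ (i:ℕ) < m)
    (fun i : Fin n => ¬ (i:ℕ) < m) (fun i j k => chiD i j k)
  have R2 := sum3_filter (fun i : Fin n => ¬ (i:ℕ) < m) (fun i : Fin n => (i:ℕ) < m)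
    (fun i : Fin n => ¬ (i:ℕ) < m) (fun i j k => chiD i j k)
  have R3 := sum3_filter (fun i : Fin n => ¬ (i:ℕ) < m) (fun i : Fin n => ¬ (i:ℕ) < m)
    (fun i : Fin n => (i:ℕ) < m) (fun i j k => chiD i j k)
  rw [R1] at C1; rw [R2] at C2; rw [R3] at C3
  have pt : ∀ i j k : Fin n,
      p^3 * chiD i j k + (p - p^3) *
        ((if (i:ℕ) < m then (if ¬(j:ℕ) < m then (if ¬(k:ℕ) < m then chiD i j k else 0) else 0) else 0)
          + (if ¬(i:ℕ) < m then (if (j:ℕ) < m then (if ¬(k:ℕ) < m then chiD i j k else 0) else 0) else 0)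
          + (if ¬(i:ℕ) < m then (if ¬(j:ℕ) < m then (if (k:ℕ) < m then chiD i j k else 0) else 0) else 0))
        ≤ hub n m p i j * hub n m p j k * hub n m p i k := by
    intro i j k
    by_cases hij : i = j
    · simp [hub, chiD, hij]
    by_cases hjk : j = k
    · simp [hub, chiD, hjk]
    by_cases hik : i = k
    · simp [hub, chiD, hik]
    have hd : chiD i j k = 1 := if_pos ⟨hij, hjk, hik⟩
    have f1 : hub n m p i j = if (i:ℕ) < m ∨ (j:ℕ) < m then 1 else p := by
      simp [hub, hij]
    have f2 : hub n m p j k = if (j:ℕ) < m ∨ (k:ℕ) < m then 1 else p := by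
      simp [hub, hjk]
    have f3 : hub n m p i k = if (i:ℕ) < m ∨ (k:ℕ) < m then 1 else p := by
      simp [hub, hik]
    rw [f1, f2, f3, hd]
    by_cases hi : (i:ℕ) < m <;> by_cases hj : (j:ℕ) < m <;> by_cases hk : (k:ℕ) < m <;>
      simp only [hi, hj, hk, or_self, or_true, true_or, or_false, false_or,
        not_true, not_false_iff, if_true, if_false, ite_true, ite_false] <;>
      nlinarith [hp0.le, hp1, sq_nonneg p, mul_pos hp0 hp0]
  have total : ∑ i : Fin n, ∑ j : Fin n, ∑ k : Fin n,
        (p^3 * chiD i j k + (p - p^3) *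
        ((if (i:ℕ) < m then (if ¬(j:ℕ) < m then (if ¬(k:ℕ) < m then chiD i j k else 0) else 0) else 0)
          + (if ¬(i:ℕ) < m then (if (j:ℕ) < m then (if ¬(k:ℕ) < m then chiD i j k else 0) else 0) else 0)
          + (if ¬(i:ℕ) < m then (if ¬(j:ℕ) < m then (if (k:ℕ) < m then chiD i j k else 0) else 0) else 0)))
      ≤ ∑ i : Fin n, ∑ j : Fin n, ∑ k : Fin n,
          hub n m p i j * hub n m p j k * hub n m p i k := by
    apply Finset.sum_le_sum; intro i _
    apply Finset.sum_le_sum; intro j _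
    apply Finset.sum_le_sum; intro k _
    exact pt i j k
  have split : ∑ i : Fin n, ∑ j : Fin n, ∑ k : Fin n,
        (p^3 * chiD i j k + (p - p^3) *
        ((if (i:ℕ) < m then (if ¬(j:ℕ) < m then (if ¬(k:ℕ) < m then chiD i j k else 0) else 0) else 0)
          + (if ¬(i:ℕ) < m then (if (j:ℕ) < m then (if ¬(k:ℕ) < m then chiD i j k else 0) else 0) else 0)
          + (if ¬(i:ℕ) < m then (if ¬(j:ℕ) < m then (if (k:ℕ) < m then chiD i j k else 0) else 0) else 0)))
      = p^3 * (∑ i : Fin n, ∑ j : Fin n, ∑ k : Fin n, chiD i j k)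
        + (p - p^3) * ((∑ i : Fin n, ∑ j : Fin n, ∑ k : Fin n,
            (if (i:ℕ) < m then (if ¬(j:ℕ) < m then (if ¬(k:ℕ) < m then chiD i j k else 0) else 0) else 0))
          + (∑ i : Fin n, ∑ j : Fin n, ∑ k : Fin n,
            (if ¬(i:ℕ) < m then (if (j:ℕ) < m then (if ¬(k:ℕ) < m then chiD i j k else 0) else 0) else 0))
          + (∑ i : Fin n, ∑ j : Fin n, ∑ k : Fin n,
            (if ¬(i:ℕ) < m then (if ¬(j:ℕ) < m then (if (k:ℕ) < m then chiD i j k else 0) else 0) else 0))) := by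
    simp_rw [mul_add, Finset.sum_add_distrib, ← Finset.mul_sum]
  rw [split] at total
  refine le_trans ?_ total
  have h1 : (0:ℝ) ≤ p^3 := by positivity
  have h2 : (0:ℝ) ≤ p - p^3 := by
    nlinarith [mul_nonneg (mul_nonneg hp0.le (sub_nonneg.2 hp1))
      (show (0:ℝ) ≤ 1 + p by linarith)]
  have goal1 := mul_le_mul_of_nonneg_left B1 h1
  have goal2 := mul_le_mul_of_nonneg_left (add_le_add (add_le_add C1 C2) C3) h2
  nlinarith [goal1, goal2]

lemma hub_ent {n m : ℕ} {p : ℝ} (hp0 : 0 < p) (hp1 : p < 1) (hmn : m ≤ n) :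
    entG p (hub n m p) ≤ (m:ℝ) * (n:ℝ) * Real.log (1/p) := by
  classical
  have hL : 0 ≤ Real.log (1/p) := by
    rw [one_div, Real.log_inv]
    have := Real.log_neg hp0 hp1
    linarith
  set S : Finset (Fin n) := Finset.univ.filter (fun i : Fin n => (i : ℕ) < m) with hSdef
  have hcard : (S.card : ℝ) = m := by rw [hSdef, card_filter_val_lt hmn]
  set t : Fin n → Fin n → ℝ := fun i j => if i = j then 0 else Ip p (hub n m p i j) with ht
  have hW := hub_isW (n := n) (m := m) hp0.le hp1.le
  have hsym : ∀ i j, t i j = t j i := by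
    intro i j
    by_cases h : i = j
    · rw [h]
    · have h' : ¬ j = i := fun h'' => h h''.symm
      simp only [ht, if_neg h, if_neg h', hW.2.1 i j]
  have hnn : ∀ i j, 0 ≤ t i j := by
    intro i j
    by_cases h : i = j
    · simp [ht, h]
    · simp only [ht, if_neg h]
      exact Ip_nonneg hp0 hp1 (hW.1 i j).1 (hW.1 i j).2
  have e0 : entG p (hub n m p) = ∑ i : Fin n, ∑ j : Fin n, (if i < j then t i j else 0) := by
    unfold entG
    refine Finset.sum_congr rfl fun i _ => Finset.sum_congr rfl fun j _ => ?_
    by_cases h : i < j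
    · rw [if_pos h, if_pos h, ht]
      simp only [if_neg (ne_of_lt h)]
    · rw [if_neg h, if_neg h]
  rw [e0]
  refine le_trans (half_sum t hsym hnn) ?_
  have step : ∑ i : Fin n, ∑ j : Fin n, t i j
      ≤ ∑ i : Fin n, ∑ j : Fin n, (if i ∈ S ∨ j ∈ S then Real.log (1/p) else 0) := by
    apply Finset.sum_le_sum; intro i _
    apply Finset.sum_le_sum; intro j _
    by_cases h : i = j
    · simp only [ht, if_pos h]
      split <;> [exact hL; exact le_refl 0]
    · simp only [ht, if_neg h]
      have hmem : ∀ x : Fin n, x ∈ S ↔ (x:ℕ) < m := by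
        intro x; rw [hSdef]; simp
      by_cases hC : (i:ℕ) < m ∨ (j:ℕ) < m
      · have hval : hub n m p i j = 1 := by simp [hub, h, hC]
        rw [hval, Ip_one]
        rw [if_pos (by rw [hmem, hmem]; exact hC)]
      · have hval : hub n m p i j = p := by simp [hub, h, hC]
        rw [hval, Ip_self hp0 hp1]
        split <;> [exact hL; exact le_refl 0]
  have horle := sum_or_le S (Real.log (1/p)) hL
  rw [hcard] at horle
  have := le_trans step horle
  linarith

lemma limsup_le_of_forall_ev (f : ℕ → ℝ) (hnn : ∀ n, 0 ≤ f n) (L : ℝ)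
    (h : ∀ b, L < b → ∀ᶠ n in atTop, f n ≤ b) : limsup f atTop ≤ L := by
  by_contra hcon
  push_neg at hcon
  have hb : L < (L + limsup f atTop) / 2 := by linarith
  have h2 : limsup f atTop ≤ (L + limsup f atTop) / 2 :=
    limsup_le_of_le (isCoboundedUnder_le_of_le atTop (fun n => hnn n)) (h _ hb)
  linarith

set_option maxHeartbeats 2000000 in
lemma cliq_eventually (δ : ℝ) (hδ : 0 < δ) (p : ℕ → ℝ) (hp : ∀ n, 0 < p n ∧ p n < 1)
    (hp0 : Tendsto p atTop (nhds 0))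
    (hnp : Tendsto (fun n : ℕ => (n : ℝ) * p n) atTop atTop)
    (b : ℝ) (hb : δ ^ ((2 : ℝ) / 3) / 2 < b) :
    ∀ᶠ n in atTop,
      phiDisc n (p n) δ / ((n : ℝ) ^ 2 * (p n) ^ 2 * Real.log (1 / p n)) ≤ b := by
  have hδ23pos : 0 < δ ^ ((2:ℝ)/3) := Real.rpow_pos_of_pos hδ _
  have hbpos : 0 < b := by linarith
  set d : ℝ := δ ^ ((1:ℝ)/3) with hd
  have hdpos : 0 < d := Real.rpow_pos_of_pos hδ _
  have hd3 : d ^ (3:ℕ) = δ := by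
    rw [hd, ← Real.rpow_natCast (δ ^ ((1:ℝ)/3)) 3, ← Real.rpow_mul hδ.le]
    norm_num
  have hd2 : d ^ (2:ℕ) = δ ^ ((2:ℝ)/3) := by
    rw [hd, ← Real.rpow_natCast (δ ^ ((1:ℝ)/3)) 2, ← Real.rpow_mul hδ.le]
    norm_num
  have hdsq : d < Real.sqrt (2*b) := by
    rw [show d = Real.sqrt (d^2) from (Real.sqrt_sq hdpos.le).symm]
    apply Real.sqrt_lt_sqrt (by positivity)
    rw [hd2]; linarith
  set c : ℝ := (d + Real.sqrt (2*b)) / 2 with hc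
  have hc0 : 0 < c := by positivity
  have hcd : d < c := by rw [hc]; linarith
  have hcs : c < Real.sqrt (2*b) := by rw [hc]; linarith
  have hc3 : δ < c ^ 3 := by
    rw [← hd3]
    exact pow_lt_pow_left₀ hcd hdpos.le (by norm_num)
  have hc2 : c ^ 2 < 2 * b := by
    have := Real.sq_sqrt (show (0:ℝ) ≤ 2*b by linarith)
    nlinarith [hcs, hc0, Real.sqrt_nonneg (2*b)]
  -- tendsto facts
  have t1 : Tendsto (fun n : ℕ => 3 / (n:ℝ)) atTop (nhds 0) :=
    tendsto_const_div_atTop_nhds_zero_nat 3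
  have t2 : Tendsto (fun n : ℕ => (p n)^3) atTop (nhds 0) := by
    have := hp0.pow 3
    norm_num at this
    exact this
  have tinv : Tendsto (fun n : ℕ => ((n:ℝ) * p n)⁻¹) atTop (nhds 0) :=
    hnp.inv_tendsto_atTop
  have t3 : Tendsto (fun n : ℕ => c^2 / ((n:ℝ) * p n)) atTop (nhds 0) := by
    simp_rw [div_eq_mul_inv]
    have := tinv.const_mul (c^2)
    simpa using this
  have t3' : Tendsto (fun n : ℕ => 3 / ((n:ℝ) * p n)) atTop (nhds 0) := by
    simp_rw [div_eq_mul_inv]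
    have := tinv.const_mul (3:ℝ)
    simpa using this
  have tR : Tendsto (fun n : ℕ =>
      -(3 / (n:ℝ)) + (1 - (p n)^3) * (c^3 - c^2 / ((n:ℝ) * p n))) atTop
      (nhds (-0 + (1 - 0) * (c^3 - 0))) :=
    (t1.neg).add ((tendsto_const_nhds.sub t2).mul (tendsto_const_nhds.sub t3))
  have E4 : ∀ᶠ n : ℕ in atTop, δ <
      -(3 / (n:ℝ)) + (1 - (p n)^3) * (c^3 - c^2 / ((n:ℝ) * p n)) := by
    apply tR.eventually_const_lt
    norm_num
    exact hc3
  have tE5 : Tendsto (fun n : ℕ => (c + 3 / ((n:ℝ) * p n))^2) atTop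
      (nhds ((c + 0)^2)) := (tendsto_const_nhds.add t3').pow 2
  have E5 : ∀ᶠ n : ℕ in atTop, (c + 3 / ((n:ℝ) * p n))^2 < 2 * b := by
    apply tE5.eventually_lt_const
    norm_num
    exact hc2
  have E1 : ∀ᶠ n : ℕ in atTop, 1 ≤ c * (p n * (n:ℝ)) := by
    have : Tendsto (fun n : ℕ => c * (p n * (n:ℝ))) atTop atTop := by
      have heq : (fun n : ℕ => c * (p n * (n:ℝ))) = fun n : ℕ => c * ((n:ℝ) * p n) := by
        funext n; ring
      rw [heq]
      exact hnp.const_mul_atTop hc0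
    exact this.eventually_ge_atTop 1
  have E2 : ∀ᶠ n in atTop, p n < 1 / (2*c) :=
    hp0.eventually_lt_const (by positivity)
  have E3 : ∀ᶠ n : ℕ in atTop, (6:ℝ) ≤ (n:ℝ) :=
    (tendsto_natCast_atTop_atTop (R := ℝ)).eventually_ge_atTop 6
  filter_upwards [E1, E2, E3, E4, E5] with n h1 h2 h3 h4 h5
  have hP0 : 0 < p n := (hp n).1
  have hP1 : p n < 1 := (hp n).2
  have hn0 : (0:ℝ) < (n:ℝ) := by linarith
  have hnP0 : 0 < (n:ℝ) * p n := by positivity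
  set P := p n with hPdef
  set m : ℕ := ⌈c * P * (n:ℝ)⌉₊ + 2 with hm
  set x : ℝ := c * P * (n:ℝ) with hx
  have hx1 : 1 ≤ x := by rw [hx]; calc (1:ℝ) ≤ c * (P * n) := h1
                                      _ = c * P * n := by ring
  have hmlow : x + 2 ≤ (m:ℝ) := by
    rw [hm]
    push_cast
    have := Nat.le_ceil (c * P * (n:ℝ))
    linarith
  have hmup : (m:ℝ) ≤ x + 3 := by
    rw [hm]
    push_cast
    have := Nat.ceil_lt_add_one (show (0:ℝ) ≤ c * P * (n:ℝ) by positivity)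
    linarith
  have hxn : x ≤ (n:ℝ)/2 := by
    rw [hx]
    have : c * P ≤ 1/2 := by
      rw [lt_div_iff₀ (by positivity : (0:ℝ) < 2*c)] at h2
      nlinarith
    nlinarith
  have hmn : m ≤ n := by
    have : (m:ℝ) ≤ (n:ℝ) := by linarith
    exact_mod_cast this
  have hL : 0 < Real.log (1/P) := by
    rw [one_div, Real.log_inv]
    linarith [Real.log_neg hP0 hP1]
  -- feasibility
  have feas : (1 + δ) * P^3 ≤ triDen (cliq n m P) := by
    have key := mul_le_mul_of_nonneg_right h4.le (show (0:ℝ) ≤ P^3 * (n:ℝ)^3 by positivity)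
    have keyeq : (-(3 / (n:ℝ)) + (1 - P^3) * (c^3 - c^2 / ((n:ℝ) * P))) * (P^3 * (n:ℝ)^3)
        = -(3 * P^3 * (n:ℝ)^2) + (1 - P^3) * (x^3 - x^2) := by
      rw [hx]; field_simp
    rw [keyeq] at key
    have hcube : x^3 - x^2 ≤ (m:ℝ)^3 - 3*(m:ℝ)^2 := by
      have hm3 : x - 1 ≤ (m:ℝ) - 3 := by linarith
      have hx0 : (0:ℝ) ≤ x := by linarith
      have hsq : x^2 ≤ (m:ℝ)^2 := by nlinarith
      have : x^2 * (x - 1) ≤ (m:ℝ)^2 * ((m:ℝ) - 3) :=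
        mul_le_mul hsq hm3 (by linarith) (by positivity)
      nlinarith [this]
    have h1p3 : (0:ℝ) ≤ 1 - P^3 := by nlinarith [pow_le_one₀ hP0.le hP1.le (n := 3)]
    have chain : (1 + δ) * P^3 * (n:ℝ)^3
        ≤ P^3 * ((n:ℝ)^3 - 3*(n:ℝ)^2) + (1 - P^3) * ((m:ℝ)^3 - 3*(m:ℝ)^2) := by
      have := mul_le_mul_of_nonneg_left hcube h1p3
      nlinarith [key, this]
    have tri := cliq_tri hP0 hP1.le hmn
    unfold triDen
    calc (1 + δ) * P^3 = ((n:ℝ)^3)⁻¹ * ((1 + δ) * P^3 * (n:ℝ)^3) := by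
          field_simp
      _ ≤ ((n:ℝ)^3)⁻¹ * (P^3 * ((n:ℝ)^3 - 3*(n:ℝ)^2) + (1 - P^3) * ((m:ℝ)^3 - 3*(m:ℝ)^2)) := by
          apply mul_le_mul_of_nonneg_left chain
          positivity
      _ ≤ _ := by
          apply mul_le_mul_of_nonneg_left (le_trans ?_ tri) (by positivity)
          exact le_refl _
  have hphi := phiDisc_le (δ := δ) hP0 hP1 (cliq_isW hP0.le hP1.le) feas
  have hent := cliq_ent (n := n) (m := m) hP0 hP1 hmn
  have hm2 : (m:ℝ)^2 ≤ 2 * b * ((n:ℝ)^2 * P^2) := by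
    have e : x + 3 = ((n:ℝ) * P) * (c + 3 / ((n:ℝ) * P)) := by
      rw [hx]; field_simp
    have hm0 : (0:ℝ) ≤ (m:ℝ) := by positivity
    have : (m:ℝ)^2 ≤ (x+3)^2 := by nlinarith
    rw [e] at this
    calc (m:ℝ)^2 ≤ ((n:ℝ) * P)^2 * (c + 3 / ((n:ℝ) * P))^2 := by
          nlinarith [this]
      _ ≤ ((n:ℝ) * P)^2 * (2*b) := by
          apply mul_le_mul_of_nonneg_left h5.le (by positivity)
      _ = 2 * b * ((n:ℝ)^2 * P^2) := by ring
  have denpos : 0 < (n:ℝ)^2 * P^2 * Real.log (1/P) := by positivity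
  rw [div_le_iff₀ denpos]
  calc phiDisc n P δ ≤ (m:ℝ)^2 * Real.log (1/P) / 2 := le_trans hphi hent
    _ ≤ (2 * b * ((n:ℝ)^2 * P^2)) * Real.log (1/P) / 2 := by
        have := mul_le_mul_of_nonneg_right hm2 hL.le
        linarith
    _ = b * ((n:ℝ)^2 * P^2 * Real.log (1/P)) := by ring

set_option maxHeartbeats 2000000 in
lemma hub_eventually (δ : ℝ) (hδ : 0 < δ) (p : ℕ → ℝ) (hp : ∀ n, 0 < p n ∧ p n < 1)
    (hp0 : Tendsto p atTop (nhds 0))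
    (hnp2 : Tendsto (fun n : ℕ => (n : ℝ) * (p n)^2) atTop atTop)
    (b : ℝ) (hb : δ / 3 < b) :
    ∀ᶠ n in atTop,
      phiDisc n (p n) δ / ((n : ℝ) ^ 2 * (p n) ^ 2 * Real.log (1 / p n)) ≤ b := by
  set c : ℝ := (δ/3 + b) / 2 with hc
  have hc0 : 0 < c := by rw [hc]; linarith
  have hcδ : δ < 3 * c := by rw [hc]; linarith
  have hcb : c < b := by rw [hc]; linarith
  have tP2 : Tendsto (fun n : ℕ => (p n)^2) atTop (nhds 0) := by
    have := hp0.pow 2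
    norm_num at this
    exact this
  have tinv2 : Tendsto (fun n : ℕ => ((n:ℝ) * (p n)^2)⁻¹) atTop (nhds 0) :=
    hnp2.inv_tendsto_atTop
  have t1n : Tendsto (fun n : ℕ => 1 / (n:ℝ)) atTop (nhds 0) :=
    tendsto_const_div_atTop_nhds_zero_nat 1
  have t2n : Tendsto (fun n : ℕ => 2 / (n:ℝ)) atTop (nhds 0) :=
    tendsto_const_div_atTop_nhds_zero_nat 2
  have t3n : Tendsto (fun n : ℕ => 3 / (n:ℝ)) atTop (nhds 0) :=
    tendsto_const_div_atTop_nhds_zero_nat 3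
  have tR : Tendsto (fun n : ℕ =>
      -(3 / (n:ℝ)) + 3 * (1 - (p n)^2) * c * (1 - c * (p n)^2 - 1/(n:ℝ))
        * (1 - c * (p n)^2 - 2/(n:ℝ))) atTop
      (nhds (-0 + 3 * (1 - 0) * c * (1 - c * 0 - 0) * (1 - c * 0 - 0))) := by
    refine (t3n.neg).add ?_
    refine Tendsto.mul ?_ ?_
    · refine Tendsto.mul ?_ ?_
      · exact ((tendsto_const_nhds.sub tP2).const_mul 3).mul_const c
      · exact (tendsto_const_nhds.sub (tP2.const_mul c)).sub t1n
    · exact (tendsto_const_nhds.sub (tP2.const_mul c)).sub t2n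
  have E4 : ∀ᶠ n : ℕ in atTop, δ <
      -(3 / (n:ℝ)) + 3 * (1 - (p n)^2) * c * (1 - c * (p n)^2 - 1/(n:ℝ))
        * (1 - c * (p n)^2 - 2/(n:ℝ)) := by
    apply tR.eventually_const_lt
    norm_num
    linarith
  have E5 : ∀ᶠ n : ℕ in atTop, c + ((n:ℝ) * (p n)^2)⁻¹ < b := by
    have : Tendsto (fun n : ℕ => c + ((n:ℝ) * (p n)^2)⁻¹) atTop (nhds (c + 0)) :=
      tendsto_const_nhds.add tinv2
    apply this.eventually_lt_const
    norm_num
    exact hcb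
  have E2 : ∀ᶠ n : ℕ in atTop, (p n)^2 < 1 / (2*c) :=
    tP2.eventually_lt_const (by positivity)
  have E3 : ∀ᶠ n : ℕ in atTop, (6:ℝ) ≤ (n:ℝ) :=
    (tendsto_natCast_atTop_atTop (R := ℝ)).eventually_ge_atTop 6
  filter_upwards [E2, E3, E4, E5] with n h2 h3 h4 h5
  have hP0 : 0 < p n := (hp n).1
  have hP1 : p n < 1 := (hp n).2
  have hn0 : (0:ℝ) < (n:ℝ) := by linarith
  set P := p n with hPdef
  have hnP0 : 0 < (n:ℝ) * P^2 := by positivity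
  set m : ℕ := ⌈c * P^2 * (n:ℝ)⌉₊ with hm
  set x : ℝ := c * P^2 * (n:ℝ) with hx
  have hx0 : 0 ≤ x := by rw [hx]; positivity
  have hmlow : x ≤ (m:ℝ) := Nat.le_ceil _
  have hmup : (m:ℝ) ≤ x + 1 := by
    have := Nat.ceil_lt_add_one hx0
    linarith [this.le]
  have hxn : x ≤ (n:ℝ)/2 := by
    rw [hx]
    have : c * P^2 ≤ 1/2 := by
      rw [lt_div_iff₀ (by positivity : (0:ℝ) < 2*c)] at h2
      nlinarith
    nlinarith
  have hmn : m ≤ n := by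
    have : (m:ℝ) ≤ (n:ℝ) := by linarith
    exact_mod_cast this
  have hL : 0 < Real.log (1/P) := by
    rw [one_div, Real.log_inv]
    linarith [Real.log_neg hP0 hP1]
  have hnm1 : (0:ℝ) ≤ (n:ℝ) - x - 1 := by linarith
  have hnm2 : (0:ℝ) ≤ (n:ℝ) - x - 2 := by linarith
  have hPP3 : (0:ℝ) ≤ P - P^3 := by
    nlinarith [mul_nonneg (mul_nonneg hP0.le (sub_nonneg.2 hP1.le))
      (show (0:ℝ) ≤ 1 + P by linarith)]
  have feas : (1 + δ) * P^3 ≤ triDen (hub n m P) := by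
    have key := mul_le_mul_of_nonneg_right h4.le (show (0:ℝ) ≤ P^3 * (n:ℝ)^3 by positivity)
    have keyeq : (-(3 / (n:ℝ)) + 3 * (1 - P^2) * c * (1 - c * P^2 - 1/(n:ℝ))
          * (1 - c * P^2 - 2/(n:ℝ))) * (P^3 * (n:ℝ)^3)
        = -(3 * P^3 * (n:ℝ)^2)
          + 3 * (P - P^3) * (x * (((n:ℝ) - x - 1) * ((n:ℝ) - x - 2))) := by
      rw [hx]; field_simp
    rw [keyeq] at key
    have mono : x * (((n:ℝ) - x - 1) * ((n:ℝ) - x - 2))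
        ≤ (m:ℝ) * (((n:ℝ) - (m:ℝ)) * ((n:ℝ) - (m:ℝ) - 1)) := by
      have g1 : (n:ℝ) - x - 1 ≤ (n:ℝ) - (m:ℝ) := by linarith
      have g2 : (n:ℝ) - x - 2 ≤ (n:ℝ) - (m:ℝ) - 1 := by linarith
      have inner : ((n:ℝ) - x - 1) * ((n:ℝ) - x - 2)
          ≤ ((n:ℝ) - (m:ℝ)) * ((n:ℝ) - (m:ℝ) - 1) :=
        mul_le_mul g1 g2 hnm2 (by linarith)
      exact mul_le_mul hmlow inner (by positivity) (by linarith)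
    have chain : (1 + δ) * P^3 * (n:ℝ)^3
        ≤ P^3 * ((n:ℝ)^3 - 3*(n:ℝ)^2)
          + 3 * (P - P^3) * ((m:ℝ)*((n:ℝ)-(m:ℝ))^2 - (m:ℝ)*((n:ℝ)-(m:ℝ))) := by
      have hmono := mul_le_mul_of_nonneg_left mono
        (show (0:ℝ) ≤ 3 * (P - P^3) by linarith)
      nlinarith [key, hmono]
    have tri := hub_tri hP0 hP1.le hmn
    unfold triDen
    calc (1 + δ) * P^3 = ((n:ℝ)^3)⁻¹ * ((1 + δ) * P^3 * (n:ℝ)^3) := by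
          field_simp
      _ ≤ ((n:ℝ)^3)⁻¹ * (P^3 * ((n:ℝ)^3 - 3*(n:ℝ)^2)
          + 3 * (P - P^3) * ((m:ℝ)*((n:ℝ)-(m:ℝ))^2 - (m:ℝ)*((n:ℝ)-(m:ℝ)))) := by
          apply mul_le_mul_of_nonneg_left chain
          positivity
      _ ≤ _ := mul_le_mul_of_nonneg_left tri (by positivity)
  have hphi := phiDisc_le (δ := δ) hP0 hP1 (hub_isW hP0.le hP1.le) feas
  have hent := hub_ent (n := n) (m := m) hP0 hP1 hmn
  have hmb : (m:ℝ) * (n:ℝ) ≤ b * ((n:ℝ)^2 * P^2) := by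
    have e : x + 1 = ((n:ℝ) * P^2) * (c + ((n:ℝ) * P^2)⁻¹) := by
      rw [hx]; field_simp
    have step1 : (m:ℝ) ≤ ((n:ℝ) * P^2) * (c + ((n:ℝ) * P^2)⁻¹) := by
      rw [← e]; linarith
    have step2 : ((n:ℝ) * P^2) * (c + ((n:ℝ) * P^2)⁻¹) ≤ ((n:ℝ) * P^2) * b :=
      mul_le_mul_of_nonneg_left h5.le (by positivity)
    calc (m:ℝ) * (n:ℝ) ≤ (((n:ℝ) * P^2) * b) * (n:ℝ) := by
          apply mul_le_mul_of_nonneg_right (le_trans step1 step2) hn0.le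
      _ = b * ((n:ℝ)^2 * P^2) := by ring
  have denpos : 0 < (n:ℝ)^2 * P^2 * Real.log (1/P) := by positivity
  rw [div_le_iff₀ denpos]
  calc phiDisc n P δ ≤ (m:ℝ) * (n:ℝ) * Real.log (1/P) := le_trans hphi hent
    _ ≤ b * ((n:ℝ)^2 * P^2) * Real.log (1/P) :=
        mul_le_mul_of_nonneg_right hmb hL.le
    _ = b * ((n:ℝ)^2 * P^2 * Real.log (1/P)) := by ring


/-- Upper bounds on the discrete variational problem. (i) If `p(n) → 0` and
`n·p(n) → ∞`, then `limsup φ(n,p(n),δ)/(n²p(n)²log(1/p(n))) ≤ δ^{2/3}/2`. (ii) If moreover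
`n·p(n)² → ∞`, then the limsup is at most `min{δ^{2/3}/2, δ/3}`. -/
theorem discrete_variational_problem_upper_bounds
    (δ : ℝ) (hδ : 0 < δ) (p : ℕ → ℝ) (hp : ∀ n, 0 < p n ∧ p n < 1)
    (hp0 : Tendsto p atTop (nhds 0))
    (hnp : Tendsto (fun n : ℕ => (n : ℝ) * p n) atTop atTop) :
    limsup
        (fun n : ℕ => phiDisc n (p n) δ / ((n : ℝ) ^ 2 * (p n) ^ 2 * Real.log (1 / p n)))
        atTop ≤ δ ^ ((2 : ℝ) / 3) / 2
      ∧ (Tendsto (fun n : ℕ => (n : ℝ) * (p n) ^ 2) atTop atTop →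
          limsup
            (fun n : ℕ => phiDisc n (p n) δ / ((n : ℝ) ^ 2 * (p n) ^ 2 * Real.log (1 / p n)))
            atTop ≤ min (δ ^ ((2 : ℝ) / 3) / 2) (δ / 3)) := by
  have hnn : ∀ n : ℕ,
      0 ≤ phiDisc n (p n) δ / ((n : ℝ) ^ 2 * (p n) ^ 2 * Real.log (1 / p n)) := by
    intro n
    apply div_nonneg (phiDisc_nonneg (hp n).1 (hp n).2)
    have : 0 ≤ Real.log (1 / p n) := by
      rw [one_div, Real.log_inv]
      linarith [Real.log_neg (hp n).1 (hp n).2]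
    positivity
  have part1 : limsup
      (fun n : ℕ => phiDisc n (p n) δ / ((n : ℝ) ^ 2 * (p n) ^ 2 * Real.log (1 / p n)))
      atTop ≤ δ ^ ((2 : ℝ) / 3) / 2 :=
    limsup_le_of_forall_ev _ hnn _
      (fun b hb => cliq_eventually δ hδ p hp hp0 hnp b hb)
  refine ⟨part1, fun hnp2 => le_min part1 ?_⟩
  exact limsup_le_of_forall_ev _ hnn _
    (fun b hb => hub_eventually δ hδ p hp hp0 hnp2 b hb)
end

section
/- For every ε > 0 there exists p₀ > 0 such that for all 0 < p ≤ p₀ and every symmetric measurable function U : [0,1]² → ℝ with 0 ≤ U(x,y) ≤ 1−p for all (x,y), one has E[I_p(p+U)] ≥ (1−ε) · I_p(1) · t(U)^{2/3}, where I_p(1) = log(1/p). -/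
open Real Filter

/-- Triangle density `t(U) = ∫_{[0,1]³} U(x,y) U(x,z) U(y,z) dx dy dz`. -/
noncomputable def triW (U : ℝ → ℝ → ℝ) : ℝ :=
  ∫ x in Set.Icc (0 : ℝ) 1, ∫ y in Set.Icc (0 : ℝ) 1, ∫ z in Set.Icc (0 : ℝ) 1,
    U x y * U x z * U y z

/-- `E[I_p(p+U)] = ∫_{[0,1]²} I_p(p + U(x,y)) dx dy`. -/
noncomputable def entShift (p : ℝ) (U : ℝ → ℝ → ℝ) : ℝ :=
  ∫ x in Set.Icc (0 : ℝ) 1, ∫ y in Set.Icc (0 : ℝ) 1, Ip p (p + U x y)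

/-- `-log(1-s) ≥ s + s²/2` on `[0,1)`. -/
lemma neg_log_one_sub_ge {s : ℝ} (h0 : 0 ≤ s) (h1 : s < 1) :
    s + s ^ 2 / 2 ≤ -Real.log (1 - s) := by
  set F : ℝ → ℝ := fun t => -Real.log (1 - t) - t - t ^ 2 / 2 with hF
  have hder : ∀ t ∈ Set.Ico (0 : ℝ) 1, HasDerivAt F (1 / (1 - t) - 1 - t) t := by
    intro t ht
    have h1t : (1 : ℝ) - t ≠ 0 := by
      have := ht.2; intro h; nlinarith [ht.1]
    have d1 : HasDerivAt (fun t : ℝ => 1 - t) (-1) t := by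
      simpa using (hasDerivAt_id t).const_sub 1
    have d2 : HasDerivAt (fun t : ℝ => Real.log (1 - t)) (-1 / (1 - t)) t := d1.log h1t
    have d3 : HasDerivAt (fun t : ℝ => t ^ 2 / 2) t t := by
      simpa using (hasDerivAt_pow 2 t).div_const 2
    have := (d2.neg.sub (hasDerivAt_id t)).sub d3
    rw [show (1 / (1 - t) - 1 - t) = -(-1 / (1 - t)) - 1 - t by ring]
    exact this
  have hmono : MonotoneOn F (Set.Ico (0 : ℝ) 1) := by
    apply monotoneOn_of_deriv_nonneg (convex_Ico 0 1)
    · intro t ht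
      exact (hder t ht).continuousAt.continuousWithinAt
    · intro t ht
      rw [interior_Ico] at ht
      exact (hder t ⟨ht.1.le, ht.2⟩).differentiableAt.differentiableWithinAt
    · intro t ht
      rw [interior_Ico] at ht
      rw [(hder t ⟨ht.1.le, ht.2⟩).deriv]
      have h1t : (0 : ℝ) < 1 - t := by linarith [ht.2]
      have e : 1 / (1 - t) - 1 - t = t ^ 2 / (1 - t) := by field_simp; ring
      rw [e]
      positivity
  have h0mem : (0 : ℝ) ∈ Set.Ico (0 : ℝ) 1 := by constructor <;> norm_num
  have := hmono h0mem ⟨h0, h1⟩ h0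
  simp only [hF] at this
  norm_num at this
  linarith

lemma second_term_ge {p u : ℝ} (hp : 0 < p) (hp1 : p < 1) (hu : 0 ≤ u) (hu1 : u ≤ 1 - p) :
    -u ≤ (1 - (p + u)) * Real.log ((1 - (p + u)) / (1 - p)) := by
  rcases eq_or_lt_of_le hu1 with h | h
  · have hz : (1 : ℝ) - (p + u) = 0 := by rw [h]; ring
    rw [hz]
    simp only [zero_mul]
    linarith
  · set w : ℝ := 1 - (p + u) with hw
    have hw0 : 0 < w := by simp only [hw]; linarith
    have h1p : 0 < 1 - p := by linarith
    have hlog : Real.log ((1 - p) / w) ≤ (1 - p) / w - 1 :=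
      Real.log_le_sub_one_of_pos (by positivity)
    have hlogflip : Real.log (w / (1 - p)) = -Real.log ((1 - p) / w) := by
      rw [← Real.log_inv]; congr 1; field_simp
    have : 1 - (1 - p) / w ≤ Real.log (w / (1 - p)) := by rw [hlogflip]; linarith
    have hmul := mul_le_mul_of_nonneg_left this hw0.le
    have : w * (1 - (1 - p) / w) = w - (1 - p) := by field_simp
    rw [this] at hmul
    have : w - (1 - p) = -u := by rw [hw]; ring
    rw [this] at hmul
    exact hmul

lemma Ip_ge_phi {p u : ℝ} (hp : 0 < p) (hp1 : p < 1) (hu : 0 ≤ u) (hu1 : u ≤ 1 - p) :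
    (p + u) * Real.log ((p + u) / p) - u ≤ Ip p (p + u) := by
  have := second_term_ge hp hp1 hu hu1
  unfold Ip
  linarith

lemma Ip_ge_sq {p u : ℝ} (hp : 0 < p) (hp1 : p < 1) (hu : 0 ≤ u) (hu1 : u ≤ 1 - p) :
    u ^ 2 / (2 * (p + u)) ≤ Ip p (p + u) := by
  have hpu : 0 < p + u := by linarith
  have hs0 : 0 ≤ u / (p + u) := by positivity
  have hs1 : u / (p + u) < 1 := by rw [div_lt_one hpu]; linarith
  have h1 := neg_log_one_sub_ge hs0 hs1
  have e1 : 1 - u / (p + u) = p / (p + u) := by field_simp; ring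
  have e2 : -Real.log (p / (p + u)) = Real.log ((p + u) / p) := by
    rw [← Real.log_inv]; congr 1; field_simp
  rw [e1, e2] at h1
  have hmul := mul_le_mul_of_nonneg_left h1 hpu.le
  have e3 : (p + u) * (u / (p + u) + (u / (p + u)) ^ 2 / 2) = u + u ^ 2 / (2 * (p + u)) := by
    field_simp
  rw [e3] at hmul
  have := Ip_ge_phi hp hp1 hu hu1
  linarith

lemma Ip_abs_le {p u : ℝ} (hp : 0 < p) (hp1 : p < 1) (hu : 0 ≤ u) (hu1 : u ≤ 1 - p) :
    |Ip p (p + u)| ≤ Real.log (1 / p) + 1 := by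
  have hpu : 0 < p + u := by linarith
  have hrat1 : (1 : ℝ) ≤ (p + u) / p := by rw [le_div_iff₀ hp]; linarith
  have hA0 : 0 ≤ (p + u) * Real.log ((p + u) / p) :=
    mul_nonneg hpu.le (Real.log_nonneg hrat1)
  have hAle : (p + u) * Real.log ((p + u) / p) ≤ Real.log (1 / p) := by
    have h1 : Real.log ((p + u) / p) ≤ Real.log (1 / p) := by
      apply Real.log_le_log (by positivity)
      gcongr
      linarith
    calc (p + u) * Real.log ((p + u) / p) ≤ 1 * Real.log ((p + u) / p) := by
          apply mul_le_mul_of_nonneg_right (by linarith) (Real.log_nonneg hrat1)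
      _ ≤ Real.log (1 / p) := by rw [one_mul]; exact h1
  have hB0 : (1 - (p + u)) * Real.log ((1 - (p + u)) / (1 - p)) ≤ 0 := by
    apply mul_nonpos_of_nonneg_of_nonpos (by linarith)
    apply Real.log_nonpos (div_nonneg (by linarith) (by linarith))
    rw [div_le_one (by linarith)]; linarith
  have hBge := second_term_ge hp hp1 hu hu1
  rw [abs_le]
  unfold Ip
  constructor
  · linarith
  · have hL0 : 0 ≤ Real.log (1 / p) := Real.log_nonneg (by rw [le_div_iff₀ hp]; linarith)
    linarith

/-- Key pointwise bound: `I_p(p+u) ≥ (1-ε) log(1/p) u²`. -/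
lemma key_pointwise {ε p u L : ℝ} (hε0 : 0 < ε) (hεhalf : ε ≤ 1 / 2) (hp : 0 < p)
    (hL : L = -Real.log p) (hL16 : 16 ≤ L) (hεL : 2 ≤ ε * L) (hpL : 4 * p * L ≤ 1)
    (hu : 0 ≤ u) (hu1 : u ≤ 1 - p) :
    (1 - ε) * L * u ^ 2 ≤ Ip p (p + u) := by
  have hL0 : 0 < L := by linarith
  have hpsmall : p ≤ 1 / (4 * L) := by
    rw [le_div_iff₀ (by positivity)]; linarith
  have hp164 : p ≤ 1 / 64 := le_trans hpsmall (by
    rw [div_le_div_iff₀ (by positivity) (by norm_num)]; linarith)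
  have hp1 : p < 1 := by linarith
  set c : ℝ := (1 - ε) * L with hc
  have hc0 : 0 < c := by
    apply mul_pos (by linarith) hL0
  have hcL : c ≤ L := by
    nlinarith
  by_cases hcase : p + u ≤ 1 / (2 * c)
  · -- small u: use quadratic bound
    have h1 := Ip_ge_sq hp hp1 hu hu1
    have hpu : 0 < p + u := by linarith
    have h2 : c * (2 * (p + u)) ≤ 1 := by
      rw [le_div_iff₀ (by positivity)] at hcase
      nlinarith
    have h3 : c * u ^ 2 ≤ u ^ 2 / (2 * (p + u)) := by
      rw [le_div_iff₀ (by positivity)]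
      nlinarith [sq_nonneg u]
    calc (1 - ε) * L * u ^ 2 = c * u ^ 2 := by rw [hc]
      _ ≤ u ^ 2 / (2 * (p + u)) := h3
      _ ≤ Ip p (p + u) := h1
  · -- large u: use concavity
    push_neg at hcase
    set a : ℝ := 1 / (4 * L) with ha
    have ha0 : 0 < a := by positivity
    have hau : a ≤ u := by
      have h1 : 1 / (2 * L) ≤ 1 / (2 * c) := by
        apply div_le_div_of_nonneg_left (by norm_num) (by positivity) (by linarith)
      have : 1 / (2 * L) - p ≤ u := by
        have := hcase.le
        nlinarith [hc0, hL0]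
      have e : 1 / (2 * L) - 1 / (4 * L) = 1 / (4 * L) := by
        field_simp; ring
      have := hpsmall
      rw [ha]
      linarith [h1, hcase.le]
    have hu0 : 0 < u := lt_of_lt_of_le ha0 hau
    have ha164 : a ≤ 1 / 64 := by
      rw [ha, div_le_div_iff₀ (by positivity) (by norm_num)]; linarith
    have ha1p : a ≤ 1 - p := by linarith
    -- the concave function
    have hconc : ConcaveOn ℝ (Set.Ioi (0 : ℝ))
        (fun v => Real.log v + (L - 1) - c * v) := by
      constructor
      · exact convex_Ioi 0
      · intro x hx y hy A B hA hB hAB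
        have hlog := strictConcaveOn_log_Ioi.concaveOn.2 hx hy hA hB hAB
        simp only [smul_eq_mul] at *
        nlinarith [hlog]
    have hmemu : u ∈ segment ℝ a (1 - p) := by
      rw [segment_eq_Icc ha1p]
      exact ⟨hau, hu1⟩
    have hmin := hconc.ge_on_segment (Set.mem_Ioi.mpr ha0)
      (Set.mem_Ioi.mpr (by linarith : (0:ℝ) < 1 - p)) hmemu
    -- endpoint at a
    have hsL : Real.sqrt L ^ 2 = L := Real.sq_sqrt hL0.le
    have hsL4 : 4 ≤ Real.sqrt L := by
      rw [show (4 : ℝ) = Real.sqrt 16 by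
        rw [show (16 : ℝ) = 4 ^ 2 by norm_num, Real.sqrt_sq (by norm_num)]]
      exact Real.sqrt_le_sqrt hL16
    have hLge : 4 * Real.sqrt L ≤ L := by nlinarith [hsL4, hsL]
    have hlogL : Real.log L ≤ 2 * (Real.sqrt L - 1) := by
      have h1 : Real.log (Real.sqrt L) = Real.log L / 2 := Real.log_sqrt hL0.le
      have h2 : Real.log (Real.sqrt L) ≤ Real.sqrt L - 1 :=
        Real.log_le_sub_one_of_pos (by positivity)
      linarith
    have hlog2 : Real.log 2 < 0.6931471808 := Real.log_two_lt_d9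
    have hfa : 0 ≤ Real.log a + (L - 1) - c * a := by
      have e1 : Real.log a = -(Real.log 4 + Real.log L) := by
        rw [ha, one_div, Real.log_inv, Real.log_mul (by norm_num) (ne_of_gt hL0)]
      have e2 : Real.log 4 = 2 * Real.log 2 := by
        rw [show (4 : ℝ) = 2 ^ 2 by norm_num, Real.log_pow]
        push_cast; ring
      have e3 : c * a = (1 - ε) / 4 := by
        rw [hc, ha]
        field_simp
      rw [e1, e2, e3]
      linarith [hLge, hsL4, hlog2, hlogL, hε0.le]
    have hfb : 0 ≤ Real.log (1 - p) + (L - 1) - c * (1 - p) := by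
      have e1 : Real.log (1 / 2) ≤ Real.log (1 - p) := by
        apply Real.log_le_log (by norm_num)
        linarith
      have e2 : Real.log (1 / 2) = -Real.log 2 := by
        rw [one_div, Real.log_inv]
      have e3 : c * (1 - p) ≤ c * 1 :=
        mul_le_mul_of_nonneg_left (by linarith) hc0.le
      rw [mul_one] at e3
      have e4 : c = L - ε * L := by rw [hc]; ring
      rw [e2] at e1
      linarith [hεL, hlog2, e1, e3]
    have hfu : 0 ≤ Real.log u + (L - 1) - c * u := le_trans (le_min hfa hfb) hmin
    -- conclude
    have hcu : c * u ^ 2 ≤ u * Real.log (u / p) - u := by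
      have e : Real.log (u / p) = Real.log u + L := by
        rw [Real.log_div (ne_of_gt hu0) (ne_of_gt hp), hL]
        ring
      rw [e]
      have hmul : 0 ≤ u * (Real.log u + (L - 1) - c * u) := mul_nonneg hu hfu
      ring_nf at hmul ⊢
      linarith [hmul]
    have hphi : u * Real.log (u / p) ≤ (p + u) * Real.log ((p + u) / p) := by
      have h1 : Real.log (u / p) ≤ Real.log ((p + u) / p) := by
        apply Real.log_le_log (by positivity)
        gcongr
        linarith
      have h2 : 0 ≤ Real.log ((p + u) / p) :=
        Real.log_nonneg (by rw [le_div_iff₀ hp]; linarith)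
      calc u * Real.log (u / p) ≤ u * Real.log ((p + u) / p) :=
            mul_le_mul_of_nonneg_left h1 hu0.le
        _ ≤ (p + u) * Real.log ((p + u) / p) :=
            mul_le_mul_of_nonneg_right (by linarith) h2
    have := Ip_ge_phi hp hp1 hu hu1
    calc (1 - ε) * L * u ^ 2 = c * u ^ 2 := by rw [hc]
      _ ≤ u * Real.log (u / p) - u := hcu
      _ ≤ (p + u) * Real.log ((p + u) / p) - u := by linarith
      _ ≤ Ip p (p + u) := this

open MeasureTheory

instance : IsProbabilityMeasure (volume.restrict (Set.Icc (0:ℝ) 1)) := by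
  constructor
  rw [Measure.restrict_apply_univ]
  simp [Real.volume_Icc]

lemma ae01 {P : ℝ → Prop} (h : ∀ x ∈ Set.Icc (0:ℝ) 1, P x) :
    ∀ᵐ x ∂(volume.restrict (Set.Icc (0:ℝ) 1)), P x :=
  (ae_restrict_iff' measurableSet_Icc).2 (Filter.Eventually.of_forall h)

lemma integrable01 {f : ℝ → ℝ} (hm : AEStronglyMeasurable f (volume.restrict (Set.Icc (0:ℝ) 1)))
    {C : ℝ} (hb : ∀ x ∈ Set.Icc (0:ℝ) 1, |f x| ≤ C) :
    Integrable f (volume.restrict (Set.Icc (0:ℝ) 1)) := by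
  refine ⟨hm, HasFiniteIntegral.of_bounded (C := C) (ae01 ?_)⟩
  simpa [Real.norm_eq_abs] using hb

lemma abs_integral01 {f : ℝ → ℝ} {C : ℝ} (hb : ∀ x ∈ Set.Icc (0:ℝ) 1, |f x| ≤ C) :
    |∫ x in Set.Icc (0:ℝ) 1, f x| ≤ C := by
  have h := norm_integral_le_of_norm_le_const (μ := volume.restrict (Set.Icc (0:ℝ) 1))
    (f := f) (C := C) (ae01 (by simpa [Real.norm_eq_abs] using hb))
  simpa [Real.norm_eq_abs, measure_univ] using h

/-- Cauchy–Schwarz on `[0,1]` for `[0,1]`-valued measurable functions. -/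
lemma cs01 {f g : ℝ → ℝ} (hf : AEStronglyMeasurable f (volume.restrict (Set.Icc (0:ℝ) 1)))
    (hg : AEStronglyMeasurable g (volume.restrict (Set.Icc (0:ℝ) 1)))
    (hf01 : ∀ x ∈ Set.Icc (0:ℝ) 1, 0 ≤ f x ∧ f x ≤ 1)
    (hg01 : ∀ x ∈ Set.Icc (0:ℝ) 1, 0 ≤ g x ∧ g x ≤ 1) :
    ∫ x in Set.Icc (0:ℝ) 1, f x * g x ≤
      Real.sqrt (∫ x in Set.Icc (0:ℝ) 1, f x ^ 2) *
        Real.sqrt (∫ x in Set.Icc (0:ℝ) 1, g x ^ 2) := by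
  have hpq : Real.HolderConjugate 2 2 := Real.HolderConjugate.two_two
  have hbdf : ∀ᵐ x ∂(volume.restrict (Set.Icc (0:ℝ) 1)), ‖f x‖ ≤ 1 :=
    ae01 (fun x hx => by rw [Real.norm_eq_abs, abs_le]; constructor <;>
      [linarith [(hf01 x hx).1]; exact (hf01 x hx).2])
  have hbdg : ∀ᵐ x ∂(volume.restrict (Set.Icc (0:ℝ) 1)), ‖g x‖ ≤ 1 :=
    ae01 (fun x hx => by rw [Real.norm_eq_abs, abs_le]; constructor <;>
      [linarith [(hg01 x hx).1]; exact (hg01 x hx).2])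
  have hfm : MemLp f (ENNReal.ofReal 2) (volume.restrict (Set.Icc (0:ℝ) 1)) :=
    MemLp.of_bound hf 1 hbdf
  have hgm : MemLp g (ENNReal.ofReal 2) (volume.restrict (Set.Icc (0:ℝ) 1)) :=
    MemLp.of_bound hg 1 hbdg
  have key := integral_mul_le_Lp_mul_Lq_of_nonneg hpq
    (ae01 (fun x hx => (hf01 x hx).1)) (ae01 (fun x hx => (hg01 x hx).1)) hfm hgm
  have convsq : ∀ F : ℝ → ℝ, (∫ x in Set.Icc (0:ℝ) 1, F x ^ (2:ℝ)) =
      ∫ x in Set.Icc (0:ℝ) 1, F x ^ 2 := by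
    intro F
    apply integral_congr_ae
    filter_upwards with x
    rw [show (2:ℝ) = ((2:ℕ):ℝ) by norm_num, Real.rpow_natCast]
  rw [convsq, convsq] at key
  rw [Real.sqrt_eq_rpow, Real.sqrt_eq_rpow]
  exact key

noncomputable def gW (U : ℝ → ℝ → ℝ) (x : ℝ) : ℝ := ∫ y in Set.Icc (0:ℝ) 1, U x y ^ 2

noncomputable def SW (U : ℝ → ℝ → ℝ) : ℝ := ∫ x in Set.Icc (0:ℝ) 1, gW U x

lemma gW_def (U : ℝ → ℝ → ℝ) (x : ℝ) : gW U x = ∫ y in Set.Icc (0:ℝ) 1, U x y ^ 2 := rfl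

section MainAux

variable {U : ℝ → ℝ → ℝ}

lemma gW_meas (hUm : Measurable (Function.uncurry U)) : Measurable (gW U) := by
  have h1 : StronglyMeasurable fun q : ℝ × ℝ => Function.uncurry U q ^ 2 :=
    (hUm.pow_const 2).stronglyMeasurable
  exact (h1.integral_prod_right' (ν := volume.restrict (Set.Icc (0:ℝ) 1))).measurable

lemma gW_nonneg (U : ℝ → ℝ → ℝ) (x : ℝ) : 0 ≤ gW U x :=
  integral_nonneg fun y => sq_nonneg _

lemma U01 (hUbd : ∀ x ∈ Set.Icc (0:ℝ) 1, ∀ y ∈ Set.Icc (0:ℝ) 1, 0 ≤ U x y ∧ U x y ≤ 1 - p)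
    (hp : 0 < p) :
    ∀ x ∈ Set.Icc (0:ℝ) 1, ∀ y ∈ Set.Icc (0:ℝ) 1, 0 ≤ U x y ∧ U x y ≤ 1 :=
  fun x hx y hy => ⟨(hUbd x hx y hy).1, le_trans (hUbd x hx y hy).2 (by linarith)⟩

lemma gW_le_one (hU01 : ∀ x ∈ Set.Icc (0:ℝ) 1, ∀ y ∈ Set.Icc (0:ℝ) 1, 0 ≤ U x y ∧ U x y ≤ 1)
    {x : ℝ} (hx : x ∈ Set.Icc (0:ℝ) 1) : gW U x ≤ 1 := by
  have h := abs_integral01 (f := fun y => U x y ^ 2) (C := 1) (fun y hy => by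
    have h := hU01 x hx y hy
    show |U x y ^ 2| ≤ 1
    rw [abs_le]
    constructor <;> nlinarith [h.1, h.2])
  calc gW U x ≤ |gW U x| := le_abs_self _
    _ ≤ 1 := h

lemma SW_nonneg (U : ℝ → ℝ → ℝ) : 0 ≤ SW U := integral_nonneg fun x => gW_nonneg U x

end MainAux

set_option maxHeartbeats 1000000 in
/-- For every `ε > 0` there is `p₀ > 0` such that for all `0 < p ≤ p₀` and
every symmetric measurable `U` with `0 ≤ U ≤ 1-p` on `[0,1]²`,
`E[I_p(p+U)] ≥ (1-ε) · log(1/p) · t(U)^{2/3}`. -/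
theorem entropy_lower_bound_from_triangle_density :
    ∀ ε > (0 : ℝ), ∃ p₀ > (0 : ℝ), ∀ p : ℝ, 0 < p → p ≤ p₀ →
      ∀ U : ℝ → ℝ → ℝ, Measurable (Function.uncurry U) → (∀ x y, U x y = U y x) →
        (∀ x ∈ Set.Icc (0 : ℝ) 1, ∀ y ∈ Set.Icc (0 : ℝ) 1, 0 ≤ U x y ∧ U x y ≤ 1 - p) →
        entShift p U ≥ (1 - ε) * Real.log (1 / p) * (triW U) ^ ((2 : ℝ) / 3) := by
  intro ε hε
  set ε' : ℝ := min ε (1/2) with hε'def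
  have hε'0 : 0 < ε' := lt_min hε (by norm_num)
  have hε'half : ε' ≤ 1/2 := min_le_right _ _
  have hε'ε : ε' ≤ ε := min_le_left _ _
  refine ⟨min (Real.exp (-2/ε')) (Real.exp (-16)),
    lt_min (Real.exp_pos _) (Real.exp_pos _), ?_⟩
  intro p hp hple U hUm hUsym hUbd
  have hpexp16 : p ≤ Real.exp (-16) := le_trans hple (min_le_right _ _)
  have hpexpε : p ≤ Real.exp (-2/ε') := le_trans hple (min_le_left _ _)
  set L : ℝ := Real.log (1/p) with hLdef
  have hLneg : L = -Real.log p := by rw [hLdef, one_div, Real.log_inv]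
  have hlogp16 : Real.log p ≤ -16 := by
    calc Real.log p ≤ Real.log (Real.exp (-16)) := Real.log_le_log hp hpexp16
      _ = -16 := Real.log_exp _
  have hL16 : 16 ≤ L := by rw [hLneg]; linarith
  have hL0 : 0 < L := by linarith
  have hεL : 2 ≤ ε' * L := by
    have h1 : Real.log p ≤ -2/ε' := by
      calc Real.log p ≤ Real.log (Real.exp (-2/ε')) := Real.log_le_log hp hpexpε
        _ = -2/ε' := Real.log_exp _
    have h2 : 2/ε' ≤ L := by
      rw [hLneg]
      have : -2/ε' = -(2/ε') := by ring
      rw [this] at h1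
      linarith
    calc (2:ℝ) = ε' * (2/ε') := by field_simp
      _ ≤ ε' * L := mul_le_mul_of_nonneg_left h2 hε'0.le
  have hexp16small : Real.exp (-16) ≤ 1/64 := by
    have h4 : (5:ℝ) ≤ Real.exp 4 := by linarith [Real.add_one_le_exp (4:ℝ)]
    have h16 : (64:ℝ) ≤ Real.exp 16 := by
      have e : Real.exp 16 = Real.exp 4 ^ 4 := by
        rw [← Real.exp_nat_mul]; norm_num
      have h2 : (25:ℝ) ≤ Real.exp 4 ^ 2 := by nlinarith [h4, Real.exp_pos (4:ℝ)]
      have h3 : (625:ℝ) ≤ (Real.exp 4 ^ 2) ^ 2 := by nlinarith [h2]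
      have e2 : (Real.exp 4 ^ 2) ^ 2 = Real.exp 4 ^ 4 := by ring
      rw [e]; linarith
    rw [Real.exp_neg]
    calc (Real.exp 16)⁻¹ ≤ 64⁻¹ := by
          apply inv_anti₀ (by norm_num) h16
      _ = 1/64 := by norm_num
  have hp64 : p ≤ 1/64 := le_trans hpexp16 hexp16small
  have hp1 : p < 1 := by linarith
  have hpL : 4 * p * L ≤ 1 := by
    set s := Real.sqrt p with hs
    have hs0 : 0 < s := Real.sqrt_pos.2 hp
    have hs2 : s^2 = p := Real.sq_sqrt hp.le
    have hsle : s ≤ 1/8 := by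
      rw [hs, show (1:ℝ)/8 = Real.sqrt (1/64) by
        rw [show (1:ℝ)/64 = (1/8)^2 by norm_num, Real.sqrt_sq (by norm_num)]]
      exact Real.sqrt_le_sqrt hp64
    have hlogs : -Real.log s ≤ 1/s - 1 := by
      have h := Real.log_le_sub_one_of_pos (inv_pos.2 hs0)
      rw [Real.log_inv] at h
      rw [one_div]
      linarith
    have hlp : Real.log p = 2 * Real.log s := by
      rw [← hs2, Real.log_pow]; push_cast; ring
    have hLs : L ≤ 2 * (1/s - 1) := by
      rw [hLneg, hlp]; linarith
    have h1 : 4 * p * L = 4 * s^2 * L := by rw [hs2]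
    have h2 : 4 * s^2 * L ≤ 4 * s^2 * (2 * (1/s - 1)) :=
      mul_le_mul_of_nonneg_left hLs (by positivity)
    have h3 : 4 * s^2 * (2 * (1/s - 1)) = 8*s - 8*s^2 := by
      field_simp; ring
    nlinarith [hs0, hsle, sq_nonneg s]
  -- abbreviations
  have hIcc : MeasurableSet (Set.Icc (0:ℝ) 1) := measurableSet_Icc
  have hU01 : ∀ x ∈ Set.Icc (0:ℝ) 1, ∀ y ∈ Set.Icc (0:ℝ) 1, 0 ≤ U x y ∧ U x y ≤ 1 :=
    U01 hUbd hp
  have hsec : ∀ x : ℝ, Measurable fun y => U x y :=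
    fun x => hUm.comp measurable_prodMk_left
  have hgm : Measurable (gW U) := gW_meas hUm
  have hg0 : ∀ x, 0 ≤ gW U x := gW_nonneg U
  have hg1 : ∀ x ∈ Set.Icc (0:ℝ) 1, gW U x ≤ 1 := fun x hx => gW_le_one hU01 hx
  have hrm : Measurable fun x => Real.sqrt (gW U x) :=
    Real.continuous_sqrt.measurable.comp hgm
  have hr01 : ∀ x ∈ Set.Icc (0:ℝ) 1,
      0 ≤ Real.sqrt (gW U x) ∧ Real.sqrt (gW U x) ≤ 1 :=
    fun x hx => ⟨Real.sqrt_nonneg _, Real.sqrt_le_one.mpr (hg1 x hx)⟩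
  have hS0 : 0 ≤ SW U := SW_nonneg U
  have hrsqS : (∫ y in Set.Icc (0:ℝ) 1, Real.sqrt (gW U y) ^ 2) = SW U := by
    rw [show SW U = ∫ x in Set.Icc (0:ℝ) 1, gW U x from rfl]
    apply integral_congr_ae
    filter_upwards with y
    exact Real.sq_sqrt (hg0 y)
  -- inner kernel bounds
  have hKb : ∀ x ∈ Set.Icc (0:ℝ) 1, ∀ y ∈ Set.Icc (0:ℝ) 1,
      |∫ z in Set.Icc (0:ℝ) 1, U x z * U y z| ≤ 1 := by
    intro x hx y hy
    apply abs_integral01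
    intro z hz
    have h1 := hU01 x hx z hz
    have h2 := hU01 y hy z hz
    rw [abs_le]
    constructor <;> nlinarith [h1.1, h1.2, h2.1, h2.2]
  have hKcs : ∀ x ∈ Set.Icc (0:ℝ) 1, ∀ y ∈ Set.Icc (0:ℝ) 1,
      (∫ z in Set.Icc (0:ℝ) 1, U x z * U y z) ≤
        Real.sqrt (gW U x) * Real.sqrt (gW U y) := by
    intro x hx y hy
    exact cs01 (hsec x).aestronglyMeasurable (hsec y).aestronglyMeasurable
      (hU01 x hx) (hU01 y hy)
  have hKmy : ∀ x : ℝ, Measurable fun y => ∫ z in Set.Icc (0:ℝ) 1, U x z * U y z := by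
    intro x
    have m1 : Measurable fun q : ℝ × ℝ => U x q.2 :=
      hUm.comp (measurable_const.prodMk measurable_snd)
    have m2 : Measurable fun q : ℝ × ℝ => U q.1 q.2 := hUm
    exact ((m1.mul m2).stronglyMeasurable.integral_prod_right'
      (ν := volume.restrict (Set.Icc (0:ℝ) 1))).measurable
  -- triangle density rewrite
  have tri_eq : triW U = ∫ x in Set.Icc (0:ℝ) 1, ∫ y in Set.Icc (0:ℝ) 1,
      U x y * ∫ z in Set.Icc (0:ℝ) 1, U x z * U y z := by
    unfold triW
    simp_rw [mul_assoc, integral_const_mul]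
  -- inner triangle bound
  have tri_inner : ∀ x ∈ Set.Icc (0:ℝ) 1,
      (∫ y in Set.Icc (0:ℝ) 1, U x y * ∫ z in Set.Icc (0:ℝ) 1, U x z * U y z) ≤
        Real.sqrt (SW U) * gW U x := by
    intro x hx
    have int1 : Integrable (fun y => U x y * ∫ z in Set.Icc (0:ℝ) 1, U x z * U y z)
        (volume.restrict (Set.Icc (0:ℝ) 1)) := by
      apply integrable01 (((hsec x).mul (hKmy x)).aestronglyMeasurable) (C := 1)
      intro y hy
      have h1 := hU01 x hx y hy
      have h2 := hKb x hx y hy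
      simp only [Pi.mul_apply]
      rw [abs_mul, abs_of_nonneg h1.1]
      calc U x y * |∫ z in Set.Icc (0:ℝ) 1, U x z * U y z| ≤ 1 * 1 := by
            apply mul_le_mul h1.2 h2 (abs_nonneg _) (by norm_num)
        _ = 1 := by norm_num
    have int2 : Integrable
        (fun y => Real.sqrt (gW U x) * (U x y * Real.sqrt (gW U y)))
        (volume.restrict (Set.Icc (0:ℝ) 1)) := by
      apply integrable01 ((measurable_const.mul ((hsec x).mul hrm)).aestronglyMeasurable)
        (C := 1)
      intro y hy
      have h1 := hU01 x hx y hy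
      have h2 := hr01 x hx
      have h3 := hr01 y hy
      simp only [Pi.mul_apply]
      rw [abs_of_nonneg (mul_nonneg h2.1 (mul_nonneg h1.1 h3.1))]
      calc Real.sqrt (gW U x) * (U x y * Real.sqrt (gW U y)) ≤ 1 * (1 * 1) := by
            apply mul_le_mul h2.2 ?_ (mul_nonneg h1.1 h3.1) (by norm_num)
            apply mul_le_mul h1.2 h3.2 h3.1 (by norm_num)
        _ = 1 := by norm_num
    have step1 : (∫ y in Set.Icc (0:ℝ) 1, U x y * ∫ z in Set.Icc (0:ℝ) 1, U x z * U y z) ≤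
        ∫ y in Set.Icc (0:ℝ) 1, Real.sqrt (gW U x) * (U x y * Real.sqrt (gW U y)) := by
      apply integral_mono_ae int1 int2
      apply ae01
      intro y hy
      have h1 := hU01 x hx y hy
      calc U x y * ∫ z in Set.Icc (0:ℝ) 1, U x z * U y z ≤
            U x y * (Real.sqrt (gW U x) * Real.sqrt (gW U y)) :=
            mul_le_mul_of_nonneg_left (hKcs x hx y hy) h1.1
        _ = Real.sqrt (gW U x) * (U x y * Real.sqrt (gW U y)) := by ring
    have step2 : (∫ y in Set.Icc (0:ℝ) 1, Real.sqrt (gW U x) * (U x y * Real.sqrt (gW U y))) =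
        Real.sqrt (gW U x) * ∫ y in Set.Icc (0:ℝ) 1, U x y * Real.sqrt (gW U y) :=
      integral_const_mul _ _
    have step3 : (∫ y in Set.Icc (0:ℝ) 1, U x y * Real.sqrt (gW U y)) ≤
        Real.sqrt (gW U x) * Real.sqrt (SW U) := by
      have h := cs01 (hsec x).aestronglyMeasurable hrm.aestronglyMeasurable
        (hU01 x hx) hr01
      rw [hrsqS] at h
      exact h
    have step4 : Real.sqrt (gW U x) * (Real.sqrt (gW U x) * Real.sqrt (SW U)) =
        Real.sqrt (SW U) * gW U x := by
      rw [← mul_assoc, Real.mul_self_sqrt (hg0 x)]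
      ring
    calc (∫ y in Set.Icc (0:ℝ) 1, U x y * ∫ z in Set.Icc (0:ℝ) 1, U x z * U y z) ≤
          Real.sqrt (gW U x) * ∫ y in Set.Icc (0:ℝ) 1, U x y * Real.sqrt (gW U y) := by
          rw [← step2]; exact step1
      _ ≤ Real.sqrt (gW U x) * (Real.sqrt (gW U x) * Real.sqrt (SW U)) :=
          mul_le_mul_of_nonneg_left step3 (Real.sqrt_nonneg _)
      _ = Real.sqrt (SW U) * gW U x := step4
  -- full triangle bound
  have hKmxy : Measurable fun q : ℝ × ℝ => ∫ z in Set.Icc (0:ℝ) 1, U q.1 z * U q.2 z := by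
    have m1 : Measurable fun q : (ℝ × ℝ) × ℝ => U q.1.1 q.2 :=
      hUm.comp (measurable_fst.fst.prodMk measurable_snd)
    have m2 : Measurable fun q : (ℝ × ℝ) × ℝ => U q.1.2 q.2 :=
      hUm.comp (measurable_fst.snd.prodMk measurable_snd)
    exact ((m1.mul m2).stronglyMeasurable.integral_prod_right'
      (ν := volume.restrict (Set.Icc (0:ℝ) 1))).measurable
  have tri_le : triW U ≤ Real.sqrt (SW U) * SW U := by
    rw [tri_eq]
    have intF : Integrable
        (fun x => ∫ y in Set.Icc (0:ℝ) 1, U x y * ∫ z in Set.Icc (0:ℝ) 1, U x z * U y z)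
        (volume.restrict (Set.Icc (0:ℝ) 1)) := by
      have hm : Measurable fun x => ∫ y in Set.Icc (0:ℝ) 1,
          U x y * ∫ z in Set.Icc (0:ℝ) 1, U x z * U y z := by
        have m0 : Measurable fun q : ℝ × ℝ =>
            U q.1 q.2 * ∫ z in Set.Icc (0:ℝ) 1, U q.1 z * U q.2 z := hUm.mul hKmxy
        exact (m0.stronglyMeasurable.integral_prod_right'
          (ν := volume.restrict (Set.Icc (0:ℝ) 1))).measurable
      apply integrable01 hm.aestronglyMeasurable (C := 1)
      intro x hx
      apply abs_integral01
      intro y hy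
      have h1 := hU01 x hx y hy
      have h2 := hKb x hx y hy
      rw [abs_mul, abs_of_nonneg h1.1]
      calc U x y * |∫ z in Set.Icc (0:ℝ) 1, U x z * U y z| ≤ 1 * 1 :=
            mul_le_mul h1.2 h2 (abs_nonneg _) (by norm_num)
        _ = 1 := by norm_num
    have intG : Integrable (fun x => Real.sqrt (SW U) * gW U x)
        (volume.restrict (Set.Icc (0:ℝ) 1)) := by
      apply integrable01 ((measurable_const.mul hgm).aestronglyMeasurable)
        (C := Real.sqrt (SW U))
      intro x hx
      simp only [Pi.mul_apply]
      rw [abs_of_nonneg (mul_nonneg (Real.sqrt_nonneg _) (hg0 x))]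
      calc Real.sqrt (SW U) * gW U x ≤ Real.sqrt (SW U) * 1 :=
            mul_le_mul_of_nonneg_left (hg1 x hx) (Real.sqrt_nonneg _)
        _ = Real.sqrt (SW U) := by norm_num
    have h := integral_mono_ae intF intG (ae01 tri_inner)
    calc (∫ x in Set.Icc (0:ℝ) 1, ∫ y in Set.Icc (0:ℝ) 1,
          U x y * ∫ z in Set.Icc (0:ℝ) 1, U x z * U y z) ≤
          ∫ x in Set.Icc (0:ℝ) 1, Real.sqrt (SW U) * gW U x := h
      _ = Real.sqrt (SW U) * SW U := integral_const_mul _ _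
  -- triangle density is nonnegative
  have htri0 : 0 ≤ triW U := by
    unfold triW
    apply setIntegral_nonneg hIcc
    intro x hx
    apply setIntegral_nonneg hIcc
    intro y hy
    apply setIntegral_nonneg hIcc
    intro z hz
    exact mul_nonneg (mul_nonneg (hU01 x hx y hy).1 (hU01 x hx z hz).1) (hU01 y hy z hz).1
  -- rpow step
  have tri23 : triW U ^ ((2:ℝ)/3) ≤ SW U := by
    rcases eq_or_lt_of_le hS0 with hS | hS
    · have h1 : triW U ≤ 0 := by
        have := tri_le
        rw [← hS] at this
        simpa using this
      have h2 : triW U = 0 := le_antisymm h1 htri0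
      rw [h2, Real.zero_rpow (by norm_num)]
      linarith
    · have h32 : Real.sqrt (SW U) * SW U = SW U ^ ((3:ℝ)/2) := by
        rw [show ((3:ℝ)/2) = 1/2 + 1 by norm_num, Real.rpow_add hS, Real.rpow_one,
          Real.sqrt_eq_rpow]
      calc triW U ^ ((2:ℝ)/3) ≤ (SW U ^ ((3:ℝ)/2)) ^ ((2:ℝ)/3) := by
            apply Real.rpow_le_rpow htri0 ?_ (by norm_num)
            rw [← h32]; exact tri_le
        _ = SW U := by
            rw [← Real.rpow_mul hS0]
            norm_num
  -- entropy lower bound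
  have hIpm : Measurable fun v : ℝ => Ip p v := by
    unfold Ip
    apply Measurable.add
    · exact measurable_id.mul (Real.measurable_log.comp (measurable_id.div_const p))
    · exact (measurable_const.sub measurable_id).mul
        (Real.measurable_log.comp ((measurable_const.sub measurable_id).div_const (1-p)))
  have hone : (0:ℝ) ≤ 1 - ε' := by linarith
  have ent_inner : ∀ x ∈ Set.Icc (0:ℝ) 1,
      (1 - ε') * L * gW U x ≤ ∫ y in Set.Icc (0:ℝ) 1, Ip p (p + U x y) := by
    intro x hx
    have intIp : Integrable (fun y => Ip p (p + U x y))
        (volume.restrict (Set.Icc (0:ℝ) 1)) := by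
      apply integrable01 ((hIpm.comp (measurable_const.add (hsec x))).aestronglyMeasurable)
        (C := L + 1)
      intro y hy
      exact Ip_abs_le hp hp1 (hUbd x hx y hy).1 (hUbd x hx y hy).2
    have intq : Integrable (fun y => (1 - ε') * L * U x y ^ 2)
        (volume.restrict (Set.Icc (0:ℝ) 1)) := by
      apply integrable01 ((measurable_const.mul ((hsec x).pow_const 2)).aestronglyMeasurable)
        (C := L)
      intro y hy
      have h1 := hU01 x hx y hy
      have hsq : U x y ^ 2 ≤ 1 := by nlinarith [h1.1, h1.2]
      simp only [Pi.mul_apply]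
      rw [abs_of_nonneg (mul_nonneg (mul_nonneg hone hL0.le) (sq_nonneg _))]
      nlinarith [sq_nonneg (U x y), hL0.le]
    have hmono := integral_mono_ae intq intIp (ae01 (fun y hy =>
      key_pointwise hε'0 hε'half hp hLneg hL16 hεL hpL
        (hUbd x hx y hy).1 (hUbd x hx y hy).2))
    have e : (∫ y in Set.Icc (0:ℝ) 1, (1 - ε') * L * U x y ^ 2) =
        (1 - ε') * L * gW U x := integral_const_mul _ _
    rw [← e]
    exact hmono
  have ent_outer : (1 - ε') * L * SW U ≤ entShift p U := by
    have intinner : Integrable (fun x => ∫ y in Set.Icc (0:ℝ) 1, Ip p (p + U x y))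
        (volume.restrict (Set.Icc (0:ℝ) 1)) := by
      have hm : Measurable fun x => ∫ y in Set.Icc (0:ℝ) 1, Ip p (p + U x y) := by
        have m0 : Measurable fun q : ℝ × ℝ => Ip p (p + U q.1 q.2) :=
          hIpm.comp (measurable_const.add hUm)
        exact (m0.stronglyMeasurable.integral_prod_right'
          (ν := volume.restrict (Set.Icc (0:ℝ) 1))).measurable
      apply integrable01 hm.aestronglyMeasurable (C := L + 1)
      intro x hx
      apply abs_integral01
      intro y hy
      exact Ip_abs_le hp hp1 (hUbd x hx y hy).1 (hUbd x hx y hy).2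
    have intg : Integrable (fun x => (1 - ε') * L * gW U x)
        (volume.restrict (Set.Icc (0:ℝ) 1)) := by
      apply integrable01 ((measurable_const.mul hgm).aestronglyMeasurable) (C := L)
      intro x hx
      simp only [Pi.mul_apply]
      rw [abs_of_nonneg (mul_nonneg (mul_nonneg hone hL0.le) (hg0 x))]
      nlinarith [hg0 x, hg1 x hx, hL0.le]
    have h := integral_mono_ae intg intinner (ae01 ent_inner)
    have e : (∫ x in Set.Icc (0:ℝ) 1, (1 - ε') * L * gW U x) =
        (1 - ε') * L * SW U := integral_const_mul _ _
    rw [← e]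
    exact h
  -- conclude
  have ht23 : 0 ≤ triW U ^ ((2:ℝ)/3) := Real.rpow_nonneg htri0 _
  rw [ge_iff_le]
  calc (1 - ε) * L * triW U ^ ((2:ℝ)/3) ≤ (1 - ε') * L * triW U ^ ((2:ℝ)/3) := by
        apply mul_le_mul_of_nonneg_right ?_ ht23
        apply mul_le_mul_of_nonneg_right ?_ hL0.le
        linarith
    _ ≤ (1 - ε') * L * SW U := by
        apply mul_le_mul_of_nonneg_left tri23 (mul_nonneg hone hL0.le)
    _ ≤ entShift p U := ent_outer
end

section
/- For every symmetric measurable function U : [0,1]² → [0,1], the triangle density satisfies t(U) ≤ ( ∫_{[0,1]²} U(x,y)² dx dy )^{3/2}. -/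
open Real

open MeasureTheory ENNReal NNReal

/-- For every symmetric measurable `U : [0,1]² → [0,1]`,
`t(U) ≤ (∫_{[0,1]²} U(x,y)² dx dy)^{3/2}`. -/
theorem triangle_density_le_L2_norm_cubed (U : ℝ → ℝ → ℝ)
    (hmeas : Measurable (Function.uncurry U)) (hsymm : ∀ x y, U x y = U y x)
    (hbd : ∀ x ∈ Set.Icc (0 : ℝ) 1, ∀ y ∈ Set.Icc (0 : ℝ) 1, 0 ≤ U x y ∧ U x y ≤ 1) :
    triW U ≤ (∫ x in Set.Icc (0 : ℝ) 1, ∫ y in Set.Icc (0 : ℝ) 1, (U x y) ^ 2)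
      ^ ((3 : ℝ) / 2) := by
  classical
  set I : Set ℝ := Set.Icc (0 : ℝ) 1 with hI
  set μ : Measure ℝ := volume.restrict I with hμ
  haveI hprob : IsProbabilityMeasure μ := by
    constructor
    rw [hμ, Measure.restrict_apply_univ, hI, Real.volume_Icc]
    norm_num
  set P : Measure (ℝ × ℝ) := μ.prod μ with hP
  haveI : IsProbabilityMeasure P := by rw [hP]; infer_instance
  -- ae membership in I × I
  have haeI : ∀ᵐ p ∂P, p.1 ∈ I ∧ p.2 ∈ I := by
    have : P = ((volume : Measure ℝ).prod volume).restrict (I ×ˢ I) := by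
      rw [hP, hμ, Measure.prod_restrict]
    rw [this]
    filter_upwards [ae_restrict_mem ((measurableSet_Icc).prod measurableSet_Icc)] with p hp
    exact ⟨hp.1, hp.2⟩
  have haeμ : ∀ᵐ z ∂μ, z ∈ I := ae_restrict_mem measurableSet_Icc
  -- slice measurability
  have hslice : ∀ x : ℝ, Measurable (fun z => U x z) := fun x =>
    hmeas.comp (measurable_const.prodMk measurable_id)
  -- definitions
  set F : ℝ → ℝ → ℝ := fun x y => ∫ z, U x z * U y z ∂μ with hF
  set g : ℝ → ℝ := fun x => ∫ z, (U x z) ^ 2 ∂μ with hg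
  set A : ℝ := ∫ x, g x ∂μ with hA
  -- measurability of uncurried functions
  have hUm : Measurable (fun p : ℝ × ℝ => U p.1 p.2) := hmeas
  have hFmeas : Measurable (fun p : ℝ × ℝ => F p.1 p.2) := by
    have h1 : Measurable (fun q : (ℝ × ℝ) × ℝ => U q.1.1 q.2 * U q.1.2 q.2) :=
      (hmeas.comp ((measurable_fst.fst).prodMk measurable_snd)).mul
        (hmeas.comp ((measurable_fst.snd).prodMk measurable_snd))
    exact (h1.stronglyMeasurable.integral_prod_right').measurable
  have hgmeas : Measurable g := by
    have h1 : Measurable (fun q : ℝ × ℝ => (U q.1 q.2) ^ 2) := hmeas.pow_const 2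
    exact (h1.stronglyMeasurable.integral_prod_right').measurable
  -- basic bounds for F and g
  have hFnn : ∀ x ∈ I, ∀ y ∈ I, 0 ≤ F x y := by
    intro x hx y hy
    apply integral_nonneg_of_ae
    filter_upwards [haeμ] with z hz
    exact mul_nonneg (hbd x hx z hz).1 (hbd y hy z hz).1
  have hFle : ∀ x ∈ I, ∀ y ∈ I, F x y ≤ 1 := by
    intro x hx y hy
    have h1 : F x y ≤ ∫ _z, (1 : ℝ) ∂μ := by
      apply integral_mono_ae
      · exact (integrable_const (1 : ℝ)).mono'
          (((hslice x).mul (hslice y)).aestronglyMeasurable)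
          (by filter_upwards [haeμ] with z hz
              have h2 := hbd x hx z hz; have h3 := hbd y hy z hz
              rw [Real.norm_eq_abs, abs_mul, abs_of_nonneg h2.1, abs_of_nonneg h3.1]
              exact mul_le_one₀ h2.2 h3.1 h3.2)
      · exact integrable_const 1
      · filter_upwards [haeμ] with z hz
        have h2 := hbd x hx z hz; have h3 := hbd y hy z hz
        exact mul_le_one₀ h2.2 h3.1 h3.2
    simpa using h1
  have hgnn : ∀ x ∈ I, 0 ≤ g x := by
    intro x hx
    exact integral_nonneg fun z => sq_nonneg _
  have hgle : ∀ x ∈ I, g x ≤ 1 := by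
    intro x hx
    have h1 : g x ≤ ∫ _z, (1 : ℝ) ∂μ := by
      apply integral_mono_ae
      · exact (integrable_const (1 : ℝ)).mono'
          (((hslice x).pow_const 2).aestronglyMeasurable)
          (by filter_upwards [haeμ] with z hz
              have h2 := hbd x hx z hz
              rw [Real.norm_eq_abs, abs_pow, abs_of_nonneg h2.1]
              exact pow_le_one₀ h2.1 h2.2)
      · exact integrable_const 1
      · filter_upwards [haeμ] with z hz
        have h2 := hbd x hx z hz
        exact pow_le_one₀ h2.1 h2.2
    simpa using h1
  -- integrability / MemLp facts on P
  have memUF : ∀ (f : ℝ × ℝ → ℝ), Measurable f →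
      (∀ᵐ p ∂P, ‖f p‖ ≤ 1) → ∀ q : ℝ≥0∞, MemLp f q P := by
    intro f hf hb q
    exact MemLp.of_bound hf.aestronglyMeasurable 1 hb
  have hUbd : ∀ᵐ p ∂P, ‖U p.1 p.2‖ ≤ 1 := by
    filter_upwards [haeI] with p hp
    have h2 := hbd p.1 hp.1 p.2 hp.2
    rw [Real.norm_eq_abs, abs_of_nonneg h2.1]; exact h2.2
  have hFbd : ∀ᵐ p ∂P, ‖F p.1 p.2‖ ≤ 1 := by
    filter_upwards [haeI] with p hp
    rw [Real.norm_eq_abs, abs_of_nonneg (hFnn _ hp.1 _ hp.2)]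
    exact hFle _ hp.1 _ hp.2
  have hMU : MemLp (fun p : ℝ × ℝ => U p.1 p.2) (ENNReal.ofReal 2) P :=
    memUF _ hUm hUbd _
  have hMF : MemLp (fun p : ℝ × ℝ => F p.1 p.2) (ENNReal.ofReal 2) P :=
    memUF _ hFmeas hFbd _
  have hIntUF : Integrable (fun p : ℝ × ℝ => U p.1 p.2 * F p.1 p.2) P := by
    refine (integrable_const (1 : ℝ)).mono'
      ((hUm.mul hFmeas).aestronglyMeasurable) ?_
    filter_upwards [hUbd, hFbd] with p h1 h2
    calc ‖U p.1 p.2 * F p.1 p.2‖ = ‖U p.1 p.2‖ * ‖F p.1 p.2‖ := norm_mul _ _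
    _ ≤ 1 * 1 := mul_le_mul h1 h2 (norm_nonneg _) zero_le_one
    _ = 1 := one_mul 1
  have hIntU2 : Integrable (fun p : ℝ × ℝ => (U p.1 p.2) ^ 2) P := by
    refine (integrable_const (1 : ℝ)).mono'
      ((hUm.pow_const 2).aestronglyMeasurable) ?_
    filter_upwards [hUbd] with p h1
    rw [Real.norm_eq_abs, abs_pow]
    calc |U p.1 p.2| ^ 2 ≤ 1 ^ 2 := by
          exact pow_le_pow_left₀ (abs_nonneg _) (by rwa [Real.norm_eq_abs] at h1) 2
    _ = 1 := one_pow 2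
  have hIntF2 : Integrable (fun p : ℝ × ℝ => (F p.1 p.2) ^ 2) P := by
    refine (integrable_const (1 : ℝ)).mono'
      ((hFmeas.pow_const 2).aestronglyMeasurable) ?_
    filter_upwards [hFbd] with p h1
    rw [Real.norm_eq_abs, abs_pow]
    calc |F p.1 p.2| ^ 2 ≤ 1 ^ 2 := by
          exact pow_le_pow_left₀ (abs_nonneg _) (by rwa [Real.norm_eq_abs] at h1) 2
    _ = 1 := one_pow 2
  have hIntgg : Integrable (fun p : ℝ × ℝ => g p.1 * g p.2) P := by
    refine (integrable_const (1 : ℝ)).mono'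
      (((hgmeas.comp measurable_fst).mul (hgmeas.comp measurable_snd)).aestronglyMeasurable) ?_
    filter_upwards [haeI] with p hp
    rw [Real.norm_eq_abs, abs_mul, abs_of_nonneg (hgnn _ hp.1), abs_of_nonneg (hgnn _ hp.2)]
    exact mul_le_one₀ (hgle _ hp.1) (hgnn _ hp.2) (hgle _ hp.2)
  -- Step 1: triW U = ∫ over product
  have step1 : triW U = ∫ p, U p.1 p.2 * F p.1 p.2 ∂P := by
    rw [triW]
    have inner : ∀ x y : ℝ, (∫ z in Set.Icc (0:ℝ) 1, U x y * U x z * U y z)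
        = U x y * F x y := by
      intro x y
      rw [hF]
      simp_rw [mul_assoc]
      rw [← hμ, MeasureTheory.integral_const_mul]
    simp_rw [inner]
    exact MeasureTheory.integral_integral hIntUF
  -- Step 2: Cauchy-Schwarz on P
  have hconj : Real.HolderConjugate 2 2 := Real.HolderConjugate.two_two
  have haeUnn : 0 ≤ᵐ[P] fun p : ℝ × ℝ => U p.1 p.2 := by
    filter_upwards [haeI] with p hp; exact (hbd _ hp.1 _ hp.2).1
  have haeFnn : 0 ≤ᵐ[P] fun p : ℝ × ℝ => F p.1 p.2 := by
    filter_upwards [haeI] with p hp; exact hFnn _ hp.1 _ hp.2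
  have cs := MeasureTheory.integral_mul_le_Lp_mul_Lq_of_nonneg hconj haeUnn haeFnn hMU hMF
  -- convert rpow 2 to pow 2
  have hrp : ∀ x : ℝ, x ^ (2 : ℝ) = x ^ (2 : ℕ) := fun x => by
    rw [← Real.rpow_natCast x 2]; norm_num
  simp_rw [hrp] at cs
  -- Step 3: identify ∫ U² over P with A
  have hA2 : ∫ p, (U p.1 p.2) ^ 2 ∂P = A := by
    have h := MeasureTheory.integral_integral (μ := μ) (ν := μ)
      (f := fun x y => (U x y) ^ 2) hIntU2
    exact h.symm
  -- Step 4: pointwise Cauchy-Schwarz for F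
  have hptCS : ∀ x ∈ I, ∀ y ∈ I, (F x y) ^ 2 ≤ g x * g y := by
    intro x hx y hy
    have hMx : MemLp (fun z => U x z) (ENNReal.ofReal 2) μ := by
      refine MemLp.of_bound (hslice x).aestronglyMeasurable 1 ?_
      filter_upwards [haeμ] with z hz
      have h2 := hbd x hx z hz
      rw [Real.norm_eq_abs, abs_of_nonneg h2.1]; exact h2.2
    have hMy : MemLp (fun z => U y z) (ENNReal.ofReal 2) μ := by
      refine MemLp.of_bound (hslice y).aestronglyMeasurable 1 ?_
      filter_upwards [haeμ] with z hz
      have h2 := hbd y hy z hz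
      rw [Real.norm_eq_abs, abs_of_nonneg h2.1]; exact h2.2
    have hxnn : 0 ≤ᵐ[μ] fun z => U x z := by
      filter_upwards [haeμ] with z hz; exact (hbd x hx z hz).1
    have hynn : 0 ≤ᵐ[μ] fun z => U y z := by
      filter_upwards [haeμ] with z hz; exact (hbd y hy z hz).1
    have cs2 := MeasureTheory.integral_mul_le_Lp_mul_Lq_of_nonneg hconj hxnn hynn hMx hMy
    simp_rw [hrp] at cs2
    have hFxy : F x y ≤ (g x) ^ ((1:ℝ)/2) * (g y) ^ ((1:ℝ)/2) := by
      rw [hF, hg]; exact cs2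
    have h1 : (F x y) ^ 2 ≤ ((g x) ^ ((1:ℝ)/2) * (g y) ^ ((1:ℝ)/2)) ^ 2 :=
      pow_le_pow_left₀ (hFnn x hx y hy) hFxy 2
    refine h1.trans_eq ?_
    rw [mul_pow, ← Real.rpow_natCast ((g x) ^ ((1:ℝ)/2)) 2,
        ← Real.rpow_natCast ((g y) ^ ((1:ℝ)/2)) 2,
        ← Real.rpow_mul (hgnn x hx), ← Real.rpow_mul (hgnn y hy)]
    norm_num
  -- Step 5: bound ∫ F² over P by A²
  have hFA : ∫ p, (F p.1 p.2) ^ 2 ∂P ≤ A ^ 2 := by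
    have h1 : ∫ p, (F p.1 p.2) ^ 2 ∂P ≤ ∫ p, g p.1 * g p.2 ∂P := by
      apply integral_mono_ae hIntF2 hIntgg
      filter_upwards [haeI] with p hp
      exact hptCS _ hp.1 _ hp.2
    have h2 : ∫ p, g p.1 * g p.2 ∂P = A * A := by
      rw [hP, MeasureTheory.integral_prod_mul, hA]
    rw [sq]
    exact h1.trans h2.le
  -- nonnegativity facts
  have hAnn : 0 ≤ A := by
    rw [hA]
    apply integral_nonneg_of_ae
    filter_upwards [haeμ] with x hx; exact hgnn x hx
  have hF2nn : 0 ≤ ∫ p, (F p.1 p.2) ^ 2 ∂P := integral_nonneg fun p => sq_nonneg _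
  -- combine
  have final : triW U ≤ A ^ ((1:ℝ)/2) * A := by
    rw [step1]
    refine cs.trans ?_
    rw [hA2]
    have h3 : (∫ p, (F p.1 p.2) ^ 2 ∂P) ^ ((1:ℝ)/2) ≤ (A ^ 2) ^ ((1:ℝ)/2) :=
      Real.rpow_le_rpow hF2nn hFA (by norm_num)
    have h4 : (A ^ 2 : ℝ) ^ ((1:ℝ)/2) = A := by
      rw [← Real.rpow_natCast A 2, ← Real.rpow_mul hAnn]
      norm_num
    calc A ^ ((1:ℝ)/2) * (∫ p, (F p.1 p.2) ^ 2 ∂P) ^ ((1:ℝ)/2)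
        ≤ A ^ ((1:ℝ)/2) * (A ^ 2) ^ ((1:ℝ)/2) :=
          mul_le_mul_of_nonneg_left h3 (Real.rpow_nonneg hAnn _)
      _ = A ^ ((1:ℝ)/2) * A := by rw [h4]
  show triW U ≤ A ^ ((3:ℝ)/2)
  refine final.trans ?_
  rcases eq_or_lt_of_le hAnn with h | h
  · rw [← h]
    norm_num
  · rw [show (3:ℝ)/2 = 1/2 + 1 by norm_num, Real.rpow_add h, Real.rpow_one]
end

section
/- Let (p_k) and (x_k) be sequences with 0 < p_k < 1, p_k → 0. (i) If x_k > 0 and x_k / p_k → 0, then I_{p_k}(p_k + x_k) / ( x_k² / (2 p_k) ) → 1 as k → ∞. (ii) If x_k / p_k → ∞ and 0 < x_k ≤ 1 − p_k for all k, then I_{p_k}(p_k + x_k) / ( x_k log(x_k / p_k) ) → 1 as k → ∞. -/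
open Real Filter

lemma log_le_aux {x : ℝ} (hx : 1 ≤ x) : Real.log x ≤ (x - x⁻¹)/2 := by
  have key : MonotoneOn (fun y : ℝ => (y - y⁻¹)/2 - Real.log y) (Set.Ici 1) := by
    have hd : ∀ y ∈ interior (Set.Ici (1:ℝ)),
        HasDerivAt (fun y : ℝ => (y - y⁻¹)/2 - Real.log y)
          ((1 - -(y^2)⁻¹)/2 - y⁻¹) y := by
      intro y hy
      rw [interior_Ici] at hy
      have hy0 : y ≠ 0 := by have : (1:ℝ) < y := hy; positivity
      exact (((hasDerivAt_id y).sub (hasDerivAt_inv hy0)).div_const 2).sub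
        (Real.hasDerivAt_log hy0)
    apply monotoneOn_of_deriv_nonneg (convex_Ici 1)
    · apply ContinuousOn.sub
      · exact (continuousOn_id.sub (continuousOn_inv₀.mono (by
          intro y hy; simp at hy ⊢; intro h; rw [h] at hy; linarith))).div_const 2
      · exact Real.continuousOn_log.mono (by
          intro y hy; simp at hy ⊢; intro h; rw [h] at hy; linarith)
    · intro y hy
      exact (hd y hy).differentiableAt.differentiableWithinAt
    · intro y hy
      rw [(hd y hy).deriv]
      rw [interior_Ici] at hy
      have hy1 : (1:ℝ) < y := hy
      have hy0 : 0 < y := by linarith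
      rw [sub_nonneg, inv_eq_one_div, div_le_div_iff₀ hy0 (by norm_num : (0:ℝ) < 2)]
      have h2 : (y^2)⁻¹ * y^2 = 1 := inv_mul_cancel₀ (by positivity)
      nlinarith [sq_nonneg (y - 1)]
  have h := key (Set.mem_Ici.2 le_rfl) (Set.mem_Ici.2 hx) hx
  simp [Real.log_one] at h
  linarith

lemma log_ge_aux {x : ℝ} (hx : 1 ≤ x) : 2*(x-1)/(x+1) ≤ Real.log x := by
  have key : MonotoneOn (fun y : ℝ => Real.log y - 2*(y-1)/(y+1)) (Set.Ici 1) := by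
    have hd : ∀ y ∈ interior (Set.Ici (1:ℝ)),
        HasDerivAt (fun y : ℝ => Real.log y - 2*(y-1)/(y+1))
          (y⁻¹ - (2*(y+1) - 2*(y-1)*1)/(y+1)^2) y := by
      intro y hy
      rw [interior_Ici] at hy
      have hy1 : (1:ℝ) < y := hy
      have hy0 : y ≠ 0 := by positivity
      have hy1' : y + 1 ≠ 0 := by positivity
      have := (Real.hasDerivAt_log hy0).sub
        ((((hasDerivAt_id y).sub_const 1).const_mul 2).div
          ((hasDerivAt_id y).add_const 1) hy1')
      exact this.congr_deriv (by simp)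
    apply monotoneOn_of_deriv_nonneg (convex_Ici 1)
    · apply ContinuousOn.sub
      · exact Real.continuousOn_log.mono (by
          intro y hy; simp at hy ⊢; intro h; rw [h] at hy; linarith)
      · apply ContinuousOn.div (by fun_prop) (by fun_prop)
        intro y hy; simp at hy; intro h; linarith
    · intro y hy
      exact (hd y hy).differentiableAt.differentiableWithinAt
    · intro y hy
      rw [(hd y hy).deriv]
      rw [interior_Ici] at hy
      have hy1 : (1:ℝ) < y := hy
      have hy0 : 0 < y := by linarith
      rw [sub_nonneg, inv_eq_one_div, div_le_div_iff₀ (by positivity) hy0]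
      nlinarith [sq_nonneg (y-1)]
  have h := key (Set.mem_Ici.2 le_rfl) (Set.mem_Ici.2 hx) hx
  simp [Real.log_one] at h
  linarith



lemma log_ge_aux' {y : ℝ} (h0 : 0 < y) (h1 : y ≤ 1) : (y - y⁻¹)/2 ≤ Real.log y := by
  have h : 1 ≤ y⁻¹ := (one_le_inv₀ h0).2 h1
  have := log_le_aux h
  rw [Real.log_inv, inv_inv] at this
  linarith

lemma log_le_aux' {y : ℝ} (h0 : 0 < y) (h1 : y ≤ 1) : Real.log y ≤ 2*(y-1)/(y+1) := by
  have h : 1 ≤ y⁻¹ := (one_le_inv₀ h0).2 h1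
  have := log_ge_aux h
  rw [Real.log_inv] at this
  have hy1 : y + 1 > 0 := by linarith
  calc Real.log y ≤ -(2*(y⁻¹-1)/(y⁻¹+1)) := by linarith
    _ = 2*(y-1)/(y+1) := by field_simp; ring

/-- bounds for `g(t) = (1+t)log(1+t) - t`. -/
lemma g_bounds {t : ℝ} (ht : 0 ≤ t) :
    t^2/(2+t) ≤ (1+t)*Real.log (1+t) - t ∧ (1+t)*Real.log (1+t) - t ≤ t^2/2 := by
  set s := 1 + t with hs
  have hs1 : 1 ≤ s := by simp [hs]; linarith
  have hs0 : 0 < s := by linarith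
  constructor
  · have hlog := log_ge_aux hs1
    have h3 : s * (2*(s-1)/(s+1)) ≤ s * Real.log s :=
      mul_le_mul_of_nonneg_left hlog (by linarith)
    have h4 : s * (2*(s-1)/(s+1)) - (s-1) = t^2/(2+t) := by
      rw [hs]; field_simp; ring
    have h5 : (1+t)*Real.log (1+t) - t = s * Real.log s - (s-1) := by rw [hs]; ring
    linarith
  · have h := log_le_aux hs1
    have h2 : s * Real.log s ≤ s * ((s - s⁻¹)/2) :=
      mul_le_mul_of_nonneg_left h (by linarith)
    have h3 : s * ((s - s⁻¹)/2) = (s^2 - 1)/2 := by field_simp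
    have : (1+t)*Real.log (1+t) - t = s * Real.log s - (s-1) := by rw [hs]; ring
    rw [this]
    nlinarith

/-- bounds for `h(u) = (1-u)log(1-u) + u`. -/
lemma h_bounds {u : ℝ} (h0 : 0 ≤ u) (h1 : u < 1) :
    u^2/2 ≤ (1-u)*Real.log (1-u) + u ∧ (1-u)*Real.log (1-u) + u ≤ u^2 := by
  set y := 1 - u with hy
  have hy0 : 0 < y := by simp [hy]; linarith
  have hy1 : y ≤ 1 := by simp [hy]; linarith
  constructor
  · have h := log_ge_aux' hy0 hy1
    have h2 : y * ((y - y⁻¹)/2) ≤ y * Real.log y :=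
      mul_le_mul_of_nonneg_left h (le_of_lt hy0)
    have h3 : y * ((y - y⁻¹)/2) = (y^2-1)/2 := by field_simp
    have h4 : (1-u)*Real.log (1-u) + u = y * Real.log y + (1-y) := by rw [hy]; ring
    rw [h4]
    nlinarith
  · have h := log_le_aux' hy0 hy1
    have h2 : y * Real.log y ≤ y * (2*(y-1)/(y+1)) :=
      mul_le_mul_of_nonneg_left h (le_of_lt hy0)
    have h3 : y * (2*(y-1)/(y+1)) + (1-y) = (y-1)^2/(y+1) := by field_simp; ring
    have h4 : (1-u)*Real.log (1-u) + u = y * Real.log y + (1-y) := by rw [hy]; ring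
    have h5 : (y-1)^2/(y+1) ≤ u^2 := by
      rw [div_le_iff₀ (by linarith)]
      nlinarith
    linarith

/-- bounds for `-(1-u)log(1-u)` on `[0,1]`. -/
lemma neg_h_bounds {u : ℝ} (h0 : 0 ≤ u) (h1 : u ≤ 1) :
    0 ≤ -((1-u)*Real.log (1-u)) ∧ -((1-u)*Real.log (1-u)) ≤ u := by
  rcases eq_or_lt_of_le h1 with h|h
  · constructor
    · simp [← h]
    · subst h; simp
  · set y := 1 - u with hy
    have hy0 : 0 < y := by simp [hy]; linarith
    have hy1 : y ≤ 1 := by simp [hy]; linarith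
    have hlog : Real.log y ≤ 0 := Real.log_nonpos (le_of_lt hy0) hy1
    constructor
    · nlinarith
    · have h2 := Real.log_le_sub_one_of_pos (inv_pos.2 hy0)
      rw [Real.log_inv] at h2
      have h3 : y * (-Real.log y) ≤ y * (y⁻¹ - 1) :=
        mul_le_mul_of_nonneg_left (by linarith) (le_of_lt hy0)
      have h4 : y * (y⁻¹ - 1) = 1 - y := by field_simp
      nlinarith

lemma Ip_eq {p x : ℝ} (hp0 : 0 < p) (hp1 : p < 1) :
    Ip p (p+x) = (p+x) * Real.log (1 + x/p) + (1-p-x) * Real.log (1 - x/(1-p)) := by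
  unfold Ip
  have h1 : (p+x)/p = 1 + x/p := by field_simp
  have h2 : (1-(p+x))/(1-p) = 1 - x/(1-p) := by
    rw [eq_sub_iff_add_eq, ← add_div, div_eq_one_iff_eq (by intro h; linarith)]
    ring
  rw [h1, h2]
  ring_nf

lemma part_i_bound {p x : ℝ} (hp0 : 0 < p) (hp1 : p < 1/2) (hx : 0 < x) (ht : x/p < 1) :
    2/(2 + x/p) ≤ Ip p (p+x) / (x^2/(2*p)) ∧ Ip p (p+x) / (x^2/(2*p)) ≤ 1 + 4*p := by
  have hp1' : p < 1 := by linarith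
  have h1p : (0:ℝ) < 1 - p := by linarith
  set t := x/p with htdef
  set u := x/(1-p) with hudef
  clear_value t u
  have ht0 : 0 < t := htdef ▸ div_pos hx hp0
  have hpt : p * t = x := by rw [htdef]; field_simp
  have hpu : (1-p) * u = x := by rw [hudef]; field_simp
  have hu0 : 0 < u := hudef ▸ div_pos hx h1p
  have hu1 : u < 1 := by
    rw [hudef, div_lt_one h1p]
    have := (div_lt_one hp0).1 (htdef ▸ ht)
    linarith
  have hG := g_bounds ht0.le
  have hH := h_bounds hu0.le hu1
  set G := (1+t)*Real.log (1+t) - t with hGdef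
  set H := (1-u)*Real.log (1-u) + u with hHdef
  clear_value G H
  have hIp : Ip p (p+x) = p * G + (1-p) * H := by
    rw [Ip_eq hp0 hp1', hGdef, hHdef]
    have e1 : p + x = p * (1+t) := by linear_combination -hpt
    have e2 : 1 - p - x = (1-p) * (1-u) := by linear_combination hpu
    rw [e1, e2, ← htdef, ← hudef]
    linear_combination hpt - hpu
  have hD : (0:ℝ) < x^2/(2*p) := by positivity
  constructor
  · rw [le_div_iff₀ hD, hIp]
    have e3 : 2/(2+t) * (x^2/(2*p)) = p * (t^2/(2+t)) := by
      rw [← hpt]; field_simp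
    rw [e3]
    have b1 : p * (t^2/(2+t)) ≤ p * G := by
      apply mul_le_mul_of_nonneg_left hG.1 hp0.le
    have b2 : 0 ≤ (1-p) * H := by
      apply mul_nonneg h1p.le
      nlinarith [hH.1]
    linarith
  · rw [div_le_iff₀ hD, hIp]
    have e4 : x^2/(2*p) = p * (t^2/2) := by rw [← hpt]; field_simp
    have b1 : p * G ≤ x^2/(2*p) := by
      rw [e4]; exact mul_le_mul_of_nonneg_left hG.2 hp0.le
    have b2 : (1-p) * H ≤ 4*p*(x^2/(2*p)) := by
      have c1 : (1-p) * H ≤ (1-p) * u^2 := mul_le_mul_of_nonneg_left hH.2 h1p.le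
      have c2 : (1-p) * u^2 = x^2/(1-p) := by rw [← hpu]; field_simp
      have c3 : x^2/(1-p) ≤ 2*x^2 := by
        rw [div_le_iff₀ h1p]
        nlinarith [mul_nonneg (sq_nonneg x) (by linarith : (0:ℝ) ≤ 1 - 2*p)]
      have c4 : 4*p*(x^2/(2*p)) = 2*x^2 := by field_simp; ring
      linarith
    have expand : (1+4*p)*(x^2/(2*p)) = x^2/(2*p) + 4*p*(x^2/(2*p)) := by ring
    rw [expand]
    linarith

lemma part_ii_bound {p x : ℝ} (hp0 : 0 < p) (hp1 : p < 1) (hx : 0 < x)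
    (hxb : x ≤ 1 - p) (ht2 : 2 ≤ x/p) :
    1 - 1/Real.log (x/p) ≤ Ip p (p+x) / (x * Real.log (x/p)) ∧
      Ip p (p+x) / (x * Real.log (x/p)) ≤
        (1 + 1/(x/p)) * (1 + Real.log 2 / Real.log (x/p)) := by
  have h1p : (0:ℝ) < 1 - p := by linarith
  set t := x/p with htdef
  set u := x/(1-p) with hudef
  clear_value t u
  have ht0 : (0:ℝ) < 2 := by norm_num
  have ht2' : (2:ℝ) ≤ t := htdef ▸ ht2
  have htpos : 0 < t := by linarith
  have hpt : p * t = x := by rw [htdef]; field_simp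
  have hpu : (1-p) * u = x := by rw [hudef]; field_simp
  have hu0 : 0 < u := hudef ▸ div_pos hx h1p
  have hu1 : u ≤ 1 := by rw [hudef, div_le_one h1p]; linarith
  have hL2 : (0:ℝ) < Real.log 2 := Real.log_pos (by norm_num)
  have hL : 0 < Real.log t := Real.log_pos (by linarith)
  have hL2L : Real.log 2 ≤ Real.log t := Real.log_le_log (by norm_num) ht2'
  have hN : 0 < x * Real.log t := mul_pos hx hL
  have hHb := neg_h_bounds hu0.le hu1
  set H := (1-u)*Real.log (1-u) with hHdef
  clear_value H
  have hIp : Ip p (p+x) = (p+x) * Real.log (1+t) + (1-p) * H := by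
    rw [Ip_eq hp0 hp1, ← htdef, ← hudef, hHdef]
    have e2 : 1 - p - x = (1-p) * (1-u) := by linear_combination hpu
    rw [e2]; ring
  have hSl : -x ≤ (1-p) * H := by
    have := mul_le_mul_of_nonneg_left hHb.2 h1p.le
    rw [hpu] at this
    linarith [this]
  have hSu : (1-p) * H ≤ 0 := by
    have := mul_le_mul_of_nonneg_left hHb.1 h1p.le
    linarith [this]
  have hlog1t : Real.log t ≤ Real.log (1+t) := Real.log_le_log (by linarith) (by linarith)
  have hlog2t : Real.log (1+t) ≤ Real.log 2 + Real.log t := by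
    have : Real.log (1+t) ≤ Real.log (2*t) := Real.log_le_log (by linarith) (by linarith)
    rwa [Real.log_mul (by norm_num) (by positivity)] at this
  constructor
  · rw [le_div_iff₀ hN, hIp]
    have e1 : (1 - 1/Real.log t) * (x * Real.log t) = x * Real.log t - x := by
      field_simp
    rw [e1]
    have b1 : x * Real.log t ≤ (p+x) * Real.log (1+t) := by
      apply mul_le_mul (by linarith) hlog1t hL.le (by linarith)
    linarith
  · rw [div_le_iff₀ hN, hIp]
    have e1 : (1 + 1/t) * (1 + Real.log 2 / Real.log t) * (x * Real.log t)
        = (x * (1+t) / t) * (Real.log 2 + Real.log t) := by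
      field_simp; ring
    rw [e1]
    have e2 : p + x = x * (1+t) / t := by
      rw [← hpt]; field_simp
    have b1 : (p+x) * Real.log (1+t) ≤ (p+x) * (Real.log 2 + Real.log t) :=
      mul_le_mul_of_nonneg_left hlog2t (by linarith)
    rw [e2] at b1 ⊢
    linarith

/-- Asymptotics of `I_p(p+x)`: if `0 < p_k < 1`, `p_k → 0`, then
(i) if `x_k > 0` and `x_k/p_k → 0`, then `I_{p_k}(p_k + x_k) ∼ x_k²/(2p_k)`;
(ii) if `x_k/p_k → ∞` and `0 < x_k ≤ 1 - p_k`, then `I_{p_k}(p_k + x_k) ∼ x_k log(x_k/p_k)`. -/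
theorem Ip_asymptotics (p x : ℕ → ℝ) (hp : ∀ k, 0 < p k ∧ p k < 1)
    (hp0 : Tendsto p atTop (nhds 0)) :
    ((∀ k, 0 < x k) → Tendsto (fun k => x k / p k) atTop (nhds 0) →
        Tendsto (fun k => Ip (p k) (p k + x k) / ((x k) ^ 2 / (2 * p k))) atTop (nhds 1))
      ∧ (Tendsto (fun k => x k / p k) atTop atTop → (∀ k, 0 < x k ∧ x k ≤ 1 - p k) →
        Tendsto (fun k => Ip (p k) (p k + x k) / (x k * Real.log (x k / p k)))
          atTop (nhds 1)) := by
  constructor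
  · intro hx hxp
    have hlow : Tendsto (fun k => 2/(2 + x k / p k)) atTop (nhds 1) := by
      have h := Tendsto.div (tendsto_const_nhds (x := (2:ℝ)) (f := atTop))
        (((tendsto_const_nhds (x := (2:ℝ)) (f := atTop)).add hxp)) (by norm_num)
      simp at h; exact h
    have hup : Tendsto (fun k => 1 + 4 * p k) atTop (nhds 1) := by
      have h := (tendsto_const_nhds (x := (1:ℝ)) (f := atTop)).add (hp0.const_mul 4)
      simpa using h
    apply tendsto_of_tendsto_of_tendsto_of_le_of_le' hlow hup
    · filter_upwards [hp0.eventually_lt_const (by norm_num : (0:ℝ) < 1/2),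
        hxp.eventually_lt_const (by norm_num : (0:ℝ) < 1)] with k h1 h2
      exact (part_i_bound (hp k).1 h1 (hx k) h2).1
    · filter_upwards [hp0.eventually_lt_const (by norm_num : (0:ℝ) < 1/2),
        hxp.eventually_lt_const (by norm_num : (0:ℝ) < 1)] with k h1 h2
      exact (part_i_bound (hp k).1 h1 (hx k) h2).2
  · intro hxt hxb
    have hlt : Tendsto (fun k => Real.log (x k / p k)) atTop atTop :=
      Real.tendsto_log_atTop.comp hxt
    have h1 : Tendsto (fun k => (x k / p k)⁻¹) atTop (nhds 0) := hxt.inv_tendsto_atTop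
    have h2 : Tendsto (fun k => (Real.log (x k / p k))⁻¹) atTop (nhds 0) :=
      hlt.inv_tendsto_atTop
    have hlow : Tendsto (fun k => 1 - 1/Real.log (x k / p k)) atTop (nhds 1) := by
      have h := (tendsto_const_nhds (x := (1:ℝ)) (f := atTop)).sub h2
      simpa [one_div] using h
    have hup : Tendsto
        (fun k => (1 + 1/(x k / p k)) * (1 + Real.log 2 / Real.log (x k / p k)))
        atTop (nhds 1) := by
      have h := ((tendsto_const_nhds (x := (1:ℝ)) (f := atTop)).add h1).mul
        ((tendsto_const_nhds (x := (1:ℝ)) (f := atTop)).add (h2.const_mul (Real.log 2)))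
      simpa [one_div, div_eq_mul_inv] using h
    apply tendsto_of_tendsto_of_tendsto_of_le_of_le' hlow hup
    · filter_upwards [hxt.eventually_ge_atTop 2] with k h1
      exact (part_ii_bound (hp k).1 (hp k).2 (hxb k).1 (hxb k).2 h1).1
    · filter_upwards [hxt.eventually_ge_atTop 2] with k h1
      exact (part_ii_bound (hp k).1 (hp k).2 (hxb k).1 (hxb k).2 h1).2
end

section
/- There exists p₀ > 0 such that for all 0 < p ≤ p₀ and all real numbers x, b with 0 ≤ x ≤ b and 0 < b ≤ 1 − p − 1/log(1/p), one has I_p(p + x) ≥ (x/b)² · I_p(p + b). -/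
open Real Filter

namespace IpAux

/-- the derivative of `I_p(p + ·)` -/
noncomputable def Df (p y : ℝ) : ℝ :=
  Real.log ((p + y) / p) - Real.log ((1 - p - y) / (1 - p))

/-- `G p y = f'(y) - y f''(y)` where `f = I_p(p+·)`. -/
noncomputable def Gf (p y : ℝ) : ℝ :=
  Df p y - y * (1 / (p + y) + 1 / (1 - p - y))

/-- `k p y = 2 f(y) - y f'(y)`. -/
noncomputable def kf (p y : ℝ) : ℝ :=
  2 * Ip p (p + y) - y * Df p y

variable {p x : ℝ}

lemma hasDerivAt_D (hp : 0 < p) (hq : p < 1) (hx1 : 0 < p + x) (hx2 : 0 < 1 - p - x) :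
    HasDerivAt (Df p) (1 / (p + x) + 1 / (1 - p - x)) x := by
  have hq' : (0:ℝ) < 1 - p := by linarith
  have h1 : HasDerivAt (fun y : ℝ => (p + y) / p) (1 / p) x := by
    simpa using ((hasDerivAt_id x).const_add p).div_const p
  have h2 : HasDerivAt (fun y : ℝ => (1 - p - y) / (1 - p)) (-1 / (1 - p)) x := by
    simpa using ((hasDerivAt_id x).const_sub (1 - p)).div_const (1 - p)
  have h3 := (h1.log (by positivity)).sub (h2.log (by positivity))
  have e : ∀ y : ℝ, 1 - p - y = (1 - p) - y := fun y => by ring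
  refine h3.congr_deriv ?_
  field_simp
  ring

lemma hasDerivAt_f (hp : 0 < p) (hq : p < 1) (hx1 : 0 < p + x) (hx2 : 0 < 1 - p - x) :
    HasDerivAt (fun y => Ip p (p + y)) (Df p x) x := by
  have hq' : (0:ℝ) < 1 - p := by linarith
  have hfun : (fun y => Ip p (p + y)) = fun y =>
      (p + y) * Real.log ((p + y) / p) + (1 - p - y) * Real.log ((1 - p - y) / (1 - p)) := by
    funext y
    simp only [Ip]
    ring_nf
  rw [hfun]
  have ha : HasDerivAt (fun y : ℝ => p + y) 1 x := by
    simpa using (hasDerivAt_id x).const_add p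
  have hb : HasDerivAt (fun y : ℝ => 1 - p - y) (-1) x := by
    simpa using (hasDerivAt_id x).const_sub (1 - p)
  have hla : HasDerivAt (fun y : ℝ => Real.log ((p + y) / p)) ((1 / p) / ((p + x) / p)) x := by
    have h1 : HasDerivAt (fun y : ℝ => (p + y) / p) (1 / p) x := by
      simpa using ((hasDerivAt_id x).const_add p).div_const p
    exact h1.log (by positivity)
  have hlb : HasDerivAt (fun y : ℝ => Real.log ((1 - p - y) / (1 - p)))
      ((-1 / (1 - p)) / ((1 - p - x) / (1 - p))) x := by
    have h2 : HasDerivAt (fun y : ℝ => (1 - p - y) / (1 - p)) (-1 / (1 - p)) x := by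
      simpa using ((hasDerivAt_id x).const_sub (1 - p)).div_const (1 - p)
    exact h2.log (by positivity)
  have := (ha.mul hla).add (hb.mul hlb)
  refine this.congr_deriv ?_
  simp only [Df]
  field_simp
  ring

lemma hasDerivAt_G (hp : 0 < p) (hq : p < 1) (hx1 : 0 < p + x) (hx2 : 0 < 1 - p - x) :
    HasDerivAt (Gf p) (x * (1 / (p + x) ^ 2 - 1 / (1 - p - x) ^ 2)) x := by
  have ha : HasDerivAt (fun y : ℝ => p + y) 1 x := by
    simpa using (hasDerivAt_id x).const_add p
  have hb : HasDerivAt (fun y : ℝ => 1 - p - y) (-1) x := by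
    simpa using (hasDerivAt_id x).const_sub (1 - p)
  have hinv1 : HasDerivAt (fun y : ℝ => 1 / (p + y)) (-(1) / (p + x) ^ 2) x := by
    simpa only [one_div, Pi.inv_def] using ha.inv (ne_of_gt hx1)
  have hinv2 : HasDerivAt (fun y : ℝ => 1 / (1 - p - y)) (-(-1) / (1 - p - x) ^ 2) x := by
    simpa only [one_div, Pi.inv_def] using hb.inv (ne_of_gt hx2)
  have hmul : HasDerivAt (fun y : ℝ => y * (1 / (p + y) + 1 / (1 - p - y)))
      (1 * (1 / (p + x) + 1 / (1 - p - x)) +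
        x * (-(1) / (p + x) ^ 2 + -(-1) / (1 - p - x) ^ 2)) x :=
    (hasDerivAt_id x).mul (hinv1.add hinv2)
  have := (hasDerivAt_D hp hq hx1 hx2).sub hmul
  refine this.congr_deriv ?_
  field_simp
  ring

lemma hasDerivAt_k (hp : 0 < p) (hq : p < 1) (hx1 : 0 < p + x) (hx2 : 0 < 1 - p - x) :
    HasDerivAt (kf p) (Gf p x) x := by
  have h1 := (hasDerivAt_f hp hq hx1 hx2).const_mul 2
  have h2 := (hasDerivAt_id x).mul (hasDerivAt_D hp hq hx1 hx2)
  have := h1.sub h2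
  refine this.congr_deriv ?_
  simp only [Gf, Df, id_eq]
  ring

/-- Value of `G` at the right endpoint `X = 1 - p - 1/log(1/p)` is nonnegative. -/
lemma G_endpoint (hp : 0 < p) (hp' : p ≤ Real.exp (-9)) :
    0 ≤ Gf p (1 - p - 1 / Real.log (1 / p)) := by
  have hexp1 : (2:ℝ) ≤ Real.exp 1 := by
    have := Real.add_one_le_exp (1:ℝ); linarith
  have hexp9 : (10:ℝ) ≤ Real.exp 9 := by
    have := Real.add_one_le_exp (9:ℝ); linarith
  have hp10 : p ≤ 1 / 10 := by
    have : Real.exp (-9) = (Real.exp 9)⁻¹ := by rw [← Real.exp_neg]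
    rw [this] at hp'
    have : (Real.exp 9)⁻¹ ≤ 1 / 10 := by
      rw [one_div]
      exact inv_anti₀ (by norm_num) hexp9
    linarith
  have hq : p < 1 := by linarith
  set L := Real.log (1 / p) with hLdef
  have hL9 : (9:ℝ) ≤ L := by
    rw [hLdef, Real.le_log_iff_exp_le (by positivity)]
    rw [Real.exp_neg] at hp'
    rw [le_div_iff₀ hp]
    nlinarith [mul_inv_cancel₀ (ne_of_gt (Real.exp_pos 9)), Real.exp_pos 9]
  have hL0 : (0:ℝ) < L := by linarith
  have hd9 : 1 / L ≤ 1 / 9 := by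
    apply one_div_le_one_div_of_le <;> linarith
  have hd0 : (0:ℝ) < 1 / L := by positivity
  set X := 1 - p - 1 / L with hXdef
  have hX0 : 0 ≤ X := by rw [hXdef]; linarith
  have e1 : p + X = 1 - 1 / L := by rw [hXdef]; ring
  have e2 : 1 - p - X = 1 / L := by rw [hXdef]; ring
  have h1L : (0:ℝ) < 1 - 1 / L := by linarith
  simp only [Gf, Df, e1, e2]
  have hlog1 : Real.log ((1 - 1 / L) / p) = Real.log (1 - 1 / L) + L := by
    rw [Real.log_div (by linarith) (by linarith), hLdef, Real.log_div one_ne_zero (by linarith),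
      Real.log_one]
    ring
  have hlog2 : Real.log ((1 / L) / (1 - p)) = -Real.log L - Real.log (1 - p) := by
    rw [Real.log_div (by positivity) (by linarith), one_div, Real.log_inv]
  rw [hlog1, hlog2]
  -- bounds on the log terms
  have h5 : Real.exp (-(1:ℝ)/5) ≤ 5/6 := by
    have e : (-(1:ℝ)/5) = -(1/5 : ℝ) := by norm_num
    rw [e, Real.exp_neg]
    have h6 : (5:ℝ)/6 = ((6:ℝ)/5)⁻¹ := by norm_num
    rw [h6]
    exact inv_anti₀ (by norm_num) (by nlinarith [Real.add_one_le_exp ((1:ℝ)/5)])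
  have hA : -(1:ℝ)/5 ≤ Real.log (1 - 1 / L) := by
    rw [← Real.log_exp (-(1:ℝ)/5)]
    apply Real.log_le_log (Real.exp_pos _)
    linarith
  have hB : (2:ℝ) ≤ Real.log L := by
    rw [Real.le_log_iff_exp_le hL0]
    have : Real.exp 2 = Real.exp 1 * Real.exp 1 := by
      rw [← Real.exp_add]; norm_num
    nlinarith [Real.exp_one_lt_d9, Real.exp_pos 1]
  have hC : -(1:ℝ)/5 ≤ Real.log (1 - p) := by
    rw [← Real.log_exp (-(1:ℝ)/5)]
    apply Real.log_le_log (Real.exp_pos _)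
    linarith
  -- the linear part
  have hXL : X * L = L - p * L - 1 := by
    rw [hXdef]; field_simp
  have hX1 : X * (1 / (1 - 1 / L)) ≤ 1 := by
    have hXle : X ≤ 1 - 1 / L := by rw [hXdef]; linarith
    calc X * (1 / (1 - 1 / L)) ≤ (1 - 1 / L) * (1 / (1 - 1 / L)) := by
          apply mul_le_mul_of_nonneg_right hXle (by positivity)
      _ = 1 := mul_one_div_cancel (ne_of_gt h1L)
  have hpL : 0 ≤ p * L := by positivity
  have hinvL : 1 / (1 / L) = L := by field_simp
  have expand : X * (1 / (1 - 1 / L) + 1 / (1 / L)) = X * (1 / (1 - 1 / L)) + X * L := by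
    rw [hinvL]; ring
  rw [expand]
  clear_value X L
  linarith

/-- `G ≥ 0` on `[0, 1 - p - 1/log(1/p)]`. -/
lemma G_nonneg (hp : 0 < p) (hp' : p ≤ Real.exp (-9))
    (hx0 : 0 ≤ x) (hxX : x ≤ 1 - p - 1 / Real.log (1 / p)) : 0 ≤ Gf p x := by
  have hexp9 : (10:ℝ) ≤ Real.exp 9 := by
    have := Real.add_one_le_exp (9:ℝ); linarith
  have hp10 : p ≤ 1 / 10 := by
    have h : Real.exp (-9) = (Real.exp 9)⁻¹ := by rw [← Real.exp_neg]
    rw [h] at hp'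
    have : (Real.exp 9)⁻¹ ≤ 1 / 10 := by
      rw [one_div]; exact inv_anti₀ (by norm_num) hexp9
    linarith
  have hq : p < 1 := by linarith
  set L := Real.log (1 / p) with hLdef
  have hL9 : (9:ℝ) ≤ L := by
    rw [hLdef, Real.le_log_iff_exp_le (by positivity)]
    rw [Real.exp_neg] at hp'
    rw [le_div_iff₀ hp]
    nlinarith [mul_inv_cancel₀ (ne_of_gt (Real.exp_pos 9)), Real.exp_pos 9]
  have hL0 : (0:ℝ) < L := by linarith
  have hd9 : 1 / L ≤ 1 / 9 := by apply one_div_le_one_div_of_le <;> linarith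
  have hd0 : (0:ℝ) < 1 / L := by positivity
  set X := 1 - p - 1 / L with hXdef
  set m := (1 - 2 * p) / 2 with hmdef
  have hm0 : 0 ≤ m := by rw [hmdef]; linarith
  have hmX : m ≤ X := by rw [hmdef, hXdef]; linarith
  -- positivity facts on [0, X]
  have pos1 : ∀ y ∈ Set.Icc (0:ℝ) X, 0 < p + y := fun y hy => by
    have := hy.1; linarith
  have pos2 : ∀ y ∈ Set.Icc (0:ℝ) X, 0 < 1 - p - y := fun y hy => by
    have := hy.2; rw [hXdef] at this; linarith
  have hder : ∀ y ∈ Set.Icc (0:ℝ) X,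
      HasDerivAt (Gf p) (y * (1 / (p + y) ^ 2 - 1 / (1 - p - y) ^ 2)) y := fun y hy =>
    hasDerivAt_G hp hq (pos1 y hy) (pos2 y hy)
  have hcont : ContinuousOn (Gf p) (Set.Icc (0:ℝ) X) := fun y hy =>
    (hder y hy).continuousAt.continuousWithinAt
  have hG0 : Gf p 0 = 0 := by
    simp [Gf, Df, div_self (ne_of_gt hp), div_self (ne_of_gt (by linarith : (0:ℝ) < 1 - p))]
  have hGX := G_endpoint hp hp'
  rw [← hXdef] at hGX
  -- case split
  rcases le_or_gt x m with hxm | hxm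
  · -- increasing on [0, m]
    have hmono : MonotoneOn (Gf p) (Set.Icc (0:ℝ) m) := by
      apply monotoneOn_of_deriv_nonneg (convex_Icc 0 m)
        (hcont.mono (Set.Icc_subset_Icc le_rfl hmX))
      · intro y hy
        rw [interior_Icc] at hy
        have hy' : y ∈ Set.Icc (0:ℝ) X := ⟨le_of_lt hy.1, le_trans (le_of_lt hy.2) hmX⟩
        exact (hder y hy').differentiableAt.differentiableWithinAt
      · intro y hy
        rw [interior_Icc] at hy
        have hy' : y ∈ Set.Icc (0:ℝ) X := ⟨le_of_lt hy.1, le_trans (le_of_lt hy.2) hmX⟩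
        rw [(hder y hy').deriv]
        have h1 : 0 < p + y := pos1 y hy'
        have h2 : 0 < 1 - p - y := pos2 y hy'
        have hle : p + y ≤ 1 - p - y := by rw [hmdef] at hy; linarith [hy.2]
        have : 1 / (1 - p - y) ^ 2 ≤ 1 / (p + y) ^ 2 := by
          apply one_div_le_one_div_of_le (by positivity)
          nlinarith
        have hy0 : 0 ≤ y := le_of_lt hy.1
        nlinarith
    have := hmono (Set.left_mem_Icc.mpr (le_trans hx0 hxm)) ⟨hx0, hxm⟩ hx0
    rw [hG0] at this
    exact this
  · -- decreasing on [m, X]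
    have hanti : AntitoneOn (Gf p) (Set.Icc m X) := by
      apply antitoneOn_of_deriv_nonpos (convex_Icc m X)
        (hcont.mono (Set.Icc_subset_Icc hm0 le_rfl))
      · intro y hy
        rw [interior_Icc] at hy
        have hy' : y ∈ Set.Icc (0:ℝ) X := ⟨le_trans hm0 (le_of_lt hy.1), le_of_lt hy.2⟩
        exact (hder y hy').differentiableAt.differentiableWithinAt
      · intro y hy
        rw [interior_Icc] at hy
        have hy' : y ∈ Set.Icc (0:ℝ) X := ⟨le_trans hm0 (le_of_lt hy.1), le_of_lt hy.2⟩
        rw [(hder y hy').deriv]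
        have h1 : 0 < p + y := pos1 y hy'
        have h2 : 0 < 1 - p - y := pos2 y hy'
        have hle : 1 - p - y ≤ p + y := by rw [hmdef] at hy; linarith [hy.1]
        have : 1 / (p + y) ^ 2 ≤ 1 / (1 - p - y) ^ 2 := by
          apply one_div_le_one_div_of_le (by positivity)
          nlinarith
        have hy0 : 0 ≤ y := le_trans hm0 (le_of_lt hy.1)
        nlinarith
    have := hanti ⟨le_of_lt hxm, hxX⟩ (Set.right_mem_Icc.mpr hmX) hxX
    linarith


/-- `k = 2 f - x f' ≥ 0` on `[0, b]`. -/
lemma k_nonneg (hp : 0 < p) (hp' : p ≤ Real.exp (-9)) {b : ℝ} (hb0 : 0 ≤ b)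
    (hbX : b ≤ 1 - p - 1 / Real.log (1 / p)) (hx0 : 0 ≤ x) (hxb : x ≤ b) :
    0 ≤ kf p x := by
  have hexp9 : (10:ℝ) ≤ Real.exp 9 := by
    have := Real.add_one_le_exp (9:ℝ); linarith
  have hp10 : p ≤ 1 / 10 := by
    have h : Real.exp (-9) = (Real.exp 9)⁻¹ := by rw [← Real.exp_neg]
    rw [h] at hp'
    have : (Real.exp 9)⁻¹ ≤ 1 / 10 := by
      rw [one_div]; exact inv_anti₀ (by norm_num) hexp9
    linarith
  have hq : p < 1 := by linarith
  have hL0 : (0:ℝ) < Real.log (1 / p) := by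
    apply Real.log_pos
    rw [lt_div_iff₀ hp]
    nlinarith
  have hd0 : (0:ℝ) < 1 / Real.log (1 / p) := by positivity
  have pos1 : ∀ y ∈ Set.Icc (0:ℝ) b, 0 < p + y := fun y hy => by
    have := hy.1; linarith
  have pos2 : ∀ y ∈ Set.Icc (0:ℝ) b, 0 < 1 - p - y := fun y hy => by
    have := hy.2; linarith
  have hder : ∀ y ∈ Set.Icc (0:ℝ) b, HasDerivAt (kf p) (Gf p y) y := fun y hy =>
    hasDerivAt_k hp hq (pos1 y hy) (pos2 y hy)
  have hcont : ContinuousOn (kf p) (Set.Icc (0:ℝ) b) := fun y hy =>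
    (hder y hy).continuousAt.continuousWithinAt
  have hmono : MonotoneOn (kf p) (Set.Icc (0:ℝ) b) := by
    apply monotoneOn_of_deriv_nonneg (convex_Icc 0 b) hcont
    · intro y hy
      rw [interior_Icc] at hy
      exact (hder y ⟨le_of_lt hy.1, le_of_lt hy.2⟩).differentiableAt.differentiableWithinAt
    · intro y hy
      rw [interior_Icc] at hy
      rw [(hder y ⟨le_of_lt hy.1, le_of_lt hy.2⟩).deriv]
      exact G_nonneg hp hp' (le_of_lt hy.1) (le_trans (le_of_lt hy.2) hbX)
  have hk0 : kf p 0 = 0 := by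
    simp [kf, Ip, div_self (ne_of_gt hp),
      div_self (ne_of_gt (by linarith : (0:ℝ) < 1 - p))]
  have := hmono (Set.left_mem_Icc.mpr hb0) ⟨hx0, hxb⟩ hx0
  rw [hk0] at this
  exact this

end IpAux

open IpAux in
theorem Ip_quadratic_lower_bound :
    ∃ p₀ > (0 : ℝ), ∀ p : ℝ, 0 < p → p ≤ p₀ → ∀ x b : ℝ,
      0 ≤ x → x ≤ b → 0 < b → b ≤ 1 - p - 1 / Real.log (1 / p) →
      Ip p (p + x) ≥ (x / b) ^ 2 * Ip p (p + b) := by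
  refine ⟨Real.exp (-9), Real.exp_pos _, fun p hp hp' x b hx0 hxb hb hbX => ?_⟩
  have hexp9 : (10:ℝ) ≤ Real.exp 9 := by
    have := Real.add_one_le_exp (9:ℝ); linarith
  have hp10 : p ≤ 1 / 10 := by
    have h : Real.exp (-9) = (Real.exp 9)⁻¹ := by rw [← Real.exp_neg]
    rw [h] at hp'
    have : (Real.exp 9)⁻¹ ≤ 1 / 10 := by
      rw [one_div]; exact inv_anti₀ (by norm_num) hexp9
    linarith
  have hq : p < 1 := by linarith
  have hq' : (0:ℝ) < 1 - p := by linarith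
  have hL0 : (0:ℝ) < Real.log (1 / p) := by
    apply Real.log_pos
    rw [lt_div_iff₀ hp]
    nlinarith
  have hd0 : (0:ℝ) < 1 / Real.log (1 / p) := by positivity
  rcases eq_or_lt_of_le hx0 with hx | hx
  · -- case x = 0
    have h1 : Ip p (p + 0) = 0 := by
      simp [Ip, div_self (ne_of_gt hp), div_self (ne_of_gt hq')]
    rw [← hx, h1, ge_iff_le, zero_div]
    norm_num
  · -- case 0 < x
    have pos1 : ∀ t ∈ Set.Icc x b, 0 < p + t := fun t ht => by
      have := ht.1; linarith
    have pos2 : ∀ t ∈ Set.Icc x b, 0 < 1 - p - t := fun t ht => by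
      have := ht.2; linarith
    have post : ∀ t ∈ Set.Icc x b, 0 < t := fun t ht => lt_of_lt_of_le hx ht.1
    have hder : ∀ t ∈ Set.Icc x b, HasDerivAt (fun s => Ip p (p + s) / s ^ 2)
        ((Df p t * t ^ 2 - Ip p (p + t) * ((2:ℕ) * t ^ (2 - 1))) / (t ^ 2) ^ 2) t := by
      intro t ht
      exact (hasDerivAt_f hp hq (pos1 t ht) (pos2 t ht)).div (hasDerivAt_pow 2 t)
        (pow_ne_zero 2 (ne_of_gt (post t ht)))
    have hcont : ContinuousOn (fun s => Ip p (p + s) / s ^ 2) (Set.Icc x b) := fun t ht =>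
      (hder t ht).continuousAt.continuousWithinAt
    have hanti : AntitoneOn (fun s => Ip p (p + s) / s ^ 2) (Set.Icc x b) := by
      apply antitoneOn_of_deriv_nonpos (convex_Icc x b) hcont
      · intro t ht
        rw [interior_Icc] at ht
        exact (hder t ⟨le_of_lt ht.1, le_of_lt ht.2⟩).differentiableAt.differentiableWithinAt
      · intro t ht
        rw [interior_Icc] at ht
        have ht' : t ∈ Set.Icc x b := ⟨le_of_lt ht.1, le_of_lt ht.2⟩
        rw [(hder t ht').deriv]
        apply div_nonpos_of_nonpos_of_nonneg _ (by positivity)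
        have hk : 0 ≤ kf p t :=
          k_nonneg hp hp' (le_of_lt hb) hbX (le_of_lt (post t ht')) ht'.2
        simp only [kf] at hk
        have htp : 0 < t := post t ht'
        norm_num
        nlinarith
    have hmain := hanti (Set.left_mem_Icc.mpr hxb) (Set.right_mem_Icc.mpr hxb) hxb
    simp only at hmain
    -- hmain : Ip p (p + b) / b ^ 2 ≤ Ip p (p + x) / x ^ 2
    have hx2 : (0:ℝ) < x ^ 2 := by positivity
    have hb2 : (0:ℝ) < b ^ 2 := by positivity
    have := (div_le_div_iff₀ hb2 hx2).mp hmain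
    rw [ge_iff_le, div_pow, div_mul_eq_mul_div, div_le_iff₀ hb2]
    nlinarith
end

section
/- There exists p₀ > 0 such that for all 0 < p ≤ p₀ and all 0 ≤ x ≤ 1 − p, one has I_p(p + x) ≥ x² · I_p(1 − 1/log(1/p)). Moreover, I_p(1 − 1/log(1/p)) / I_p(1) → 1 as p → 0⁺, where I_p(1) = log(1/p); consequently I_p(p+x) ≥ (1+o(1)) x² I_p(1) uniformly in x as p → 0⁺. -/
open Real Filter

private lemma one_sub_inv_le_log' {t : ℝ} (ht : 0 < t) : 1 - 1/t ≤ Real.log t := by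
  have h := Real.log_le_sub_one_of_pos (show (0:ℝ) < 1/t by positivity)
  rw [one_div, Real.log_inv] at h
  rw [one_div]
  linarith

/-- Lower bound `Ip p q ≥ q log(q/p) - (q - p)` for `0 < p < 1`, `0 < q ≤ 1`. -/
private lemma Ip_ge (p q : ℝ) (hp : 0 < p) (hp1 : p < 1) (hq0 : 0 < q) (hq1 : q ≤ 1) :
    q * Real.log (q/p) - (q - p) ≤ Ip p q := by
  rw [Ip]
  rcases eq_or_lt_of_le hq1 with h | h
  · rw [← h]
    simp
    linarith
  · have h1q : 0 < 1 - q := by linarith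
    have h1p : 0 < 1 - p := by linarith
    have ht : 0 < (1-q)/(1-p) := by positivity
    have h2 := one_sub_inv_le_log' ht
    have h3 : (1:ℝ)/((1-q)/(1-p)) = (1-p)/(1-q) := one_div_div _ _
    rw [h3] at h2
    have h4 := mul_le_mul_of_nonneg_left h2 h1q.le
    have h5 : (1-q) * (1 - (1-p)/(1-q)) = p - q := by field_simp; ring
    rw [h5] at h4
    linarith

/-- Chord inequality for the logarithm, from concavity. -/
private lemma log_chord {p z x : ℝ} (hp : 0 < p) (hz : 0 < z) (hzx : z ≤ x) :
    z * Real.log ((p+x)/p) ≤ x * Real.log ((p+z)/p) := by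
  have hx : 0 < x := lt_of_lt_of_le hz hzx
  have ha : (0:ℝ) ≤ 1 - z/x := by
    rw [sub_nonneg]
    exact (div_le_one hx).2 hzx
  have hb : (0:ℝ) ≤ z/x := by positivity
  have hab : (1 - z/x) + z/x = 1 := by ring
  have h1 : (1:ℝ) ∈ Set.Ioi (0:ℝ) := by norm_num
  have h2 : (p+x)/p ∈ Set.Ioi (0:ℝ) := Set.mem_Ioi.2 (by positivity)
  have hcc := strictConcaveOn_log_Ioi.concaveOn.2 h1 h2 ha hb hab
  simp only [smul_eq_mul, Real.log_one, mul_zero, zero_add] at hcc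
  have hpt : (1 - z/x) * 1 + (z/x) * ((p+x)/p) = (p+z)/p := by
    field_simp
    ring
  rw [hpt] at hcc
  have := mul_le_mul_of_nonneg_left hcc hx.le
  calc z * Real.log ((p+x)/p) = x * (z/x * Real.log ((p+x)/p)) := by
        field_simp
    _ ≤ x * Real.log ((p+z)/p) := this

private lemma psi_neg_step {p C x y : ℝ} (hp : 0 < p) (hx : 0 < x) (hxy : x ≤ y)
    (h : Real.log (p+x) - Real.log p - 2*C*x ≤ 0) :
    Real.log (p+y) - Real.log p - 2*C*y ≤ 0 := by
  have hy : 0 < y := lt_of_lt_of_le hx hxy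
  have hF := log_chord hp hx hxy
  have e1 : Real.log ((p+y)/p) = Real.log (p+y) - Real.log p :=
    Real.log_div (by positivity) hp.ne'
  have e2 : Real.log ((p+x)/p) = Real.log (p+x) - Real.log p :=
    Real.log_div (by positivity) hp.ne'
  rw [e1, e2] at hF
  nlinarith [mul_le_mul_of_nonneg_left h hy.le, hF, hx, hy]

private lemma psi_pos_step {p C x z : ℝ} (hp : 0 < p) (hz : 0 < z) (hzx : z ≤ x)
    (h : 0 ≤ Real.log (p+x) - Real.log p - 2*C*x) :
    0 ≤ Real.log (p+z) - Real.log p - 2*C*z := by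
  have hx : 0 < x := lt_of_lt_of_le hz hzx
  have hF := log_chord hp hz hzx
  have e1 : Real.log ((p+x)/p) = Real.log (p+x) - Real.log p :=
    Real.log_div (by positivity) hp.ne'
  have e2 : Real.log ((p+z)/p) = Real.log (p+z) - Real.log p :=
    Real.log_div (by positivity) hp.ne'
  rw [e1, e2] at hF
  nlinarith [mul_le_mul_of_nonneg_left h hz.le, hF, hx, hz]

/-- The function `φ(x) = (p+x)(log(p+x) - log p) - x - C x²` is nonnegative on `[0,b]`
as soon as it is nonnegative at `b` (it vanishes at `0` and is unimodal). -/
private lemma phi_nonneg {p b C : ℝ} (hp : 0 < p)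
    (hend : 0 ≤ (p+b) * (Real.log (p+b) - Real.log p) - b - C * b^2) :
    ∀ x, 0 ≤ x → x ≤ b → 0 ≤ (p+x) * (Real.log (p+x) - Real.log p) - x - C * x^2 := by
  set φ : ℝ → ℝ := fun y => (p+y) * (Real.log (p+y) - Real.log p) - y - C * y^2 with hφ
  have hder : ∀ y : ℝ, 0 ≤ y → HasDerivAt φ (Real.log (p+y) - Real.log p - 2*C*y) y := by
    intro y hy
    have hpy : (0:ℝ) < p + y := by linarith
    have h1 : HasDerivAt (fun t : ℝ => p + t) 1 y := by
      simpa using (hasDerivAt_id y).const_add p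
    have h2 : HasDerivAt (fun t : ℝ => Real.log (p + t)) ((p+y)⁻¹ * 1) y :=
      (Real.hasDerivAt_log hpy.ne').comp y h1
    have h3 : HasDerivAt (fun t : ℝ => Real.log (p + t) - Real.log p) ((p+y)⁻¹ * 1) y :=
      h2.sub_const _
    have h4 := h1.mul h3
    have h5 : HasDerivAt (fun t : ℝ => C * t^2) (C * (2*y)) y := by
      have h := (hasDerivAt_pow 2 y).const_mul C
      norm_num at h
      exact h
    have h6 := (h4.sub (hasDerivAt_id y)).sub h5
    refine h6.congr_deriv ?_
    simp only [mul_one, mul_inv_cancel₀ hpy.ne']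
    ring
  have hphi0 : φ 0 = 0 := by simp [hφ]
  intro x hx0 hxb
  have hb0 : 0 ≤ b := le_trans hx0 hxb
  rcases hx0.eq_or_lt with rfl | hx0'
  · simp
  rcases le_or_gt 0 (Real.log (p+x) - Real.log p - 2*C*x) with hsgn | hsgn
  · -- φ is monotone on [0, x]
    have hmono : MonotoneOn φ (Set.Icc 0 x) := by
      apply monotoneOn_of_deriv_nonneg (convex_Icc 0 x)
      · intro y hy
        exact (hder y hy.1).continuousAt.continuousWithinAt
      · rw [interior_Icc]
        intro y hy
        exact (hder y hy.1.le).differentiableAt.differentiableWithinAt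
      · rw [interior_Icc]
        intro y hy
        rw [(hder y hy.1.le).deriv]
        exact psi_pos_step hp hy.1 hy.2.le hsgn
    have h := hmono (Set.mem_Icc.2 ⟨le_refl 0, hx0'.le⟩) (Set.mem_Icc.2 ⟨hx0'.le, le_refl x⟩) hx0'.le
    rw [hphi0] at h
    exact h
  · -- φ is antitone on [x, b]
    have hanti : AntitoneOn φ (Set.Icc x b) := by
      apply antitoneOn_of_deriv_nonpos (convex_Icc x b)
      · intro y hy
        exact (hder y (le_trans hx0'.le hy.1)).continuousAt.continuousWithinAt
      · rw [interior_Icc]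
        intro y hy
        exact (hder y (le_trans hx0'.le hy.1.le)).differentiableAt.differentiableWithinAt
      · rw [interior_Icc]
        intro y hy
        rw [(hder y (le_trans hx0'.le hy.1.le)).deriv]
        exact psi_neg_step hp hx0' hy.1.le hsgn.le
    have h := hanti (Set.mem_Icc.2 ⟨le_refl x, hxb⟩) (Set.mem_Icc.2 ⟨hxb, le_refl b⟩) hxb
    exact le_trans hend h

set_option maxHeartbeats 2000000 in
/-- There exists `p₀ > 0` such that for all `0 < p ≤ p₀` and `0 ≤ x ≤ 1-p`,
`I_p(p+x) ≥ x² I_p(1 - 1/log(1/p))`; moreover `I_p(1 - 1/log(1/p)) / I_p(1) → 1` as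
`p → 0⁺`, where `I_p(1) = log(1/p)`. -/
theorem Ip_global_quadratic_lower_bound :
    (∃ p₀ > (0 : ℝ), ∀ p : ℝ, 0 < p → p ≤ p₀ → ∀ x : ℝ, 0 ≤ x → x ≤ 1 - p →
        Ip p (p + x) ≥ x ^ 2 * Ip p (1 - 1 / Real.log (1 / p)))
      ∧ Tendsto (fun p : ℝ => Ip p (1 - 1 / Real.log (1 / p)) / Real.log (1 / p))
          (nhdsWithin 0 (Set.Ioi 0)) (nhds 1) := by
  constructor
  · -- Part 1
    refine ⟨Real.exp (-2), Real.exp_pos _, fun p hp hpp x hx0 hxb => ?_⟩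
    have hexp1 : Real.exp (-2:ℝ) < 1 := Real.exp_lt_one_iff.2 (by norm_num)
    have hp1 : p < 1 := lt_of_le_of_lt hpp hexp1
    have h1p : (0:ℝ) < 1 - p := by linarith
    have hlogp : Real.log p ≤ -2 := by
      have := (Real.log_le_log_iff hp (Real.exp_pos _)).2 hpp
      rwa [Real.log_exp] at this
    set L := Real.log (1/p) with hL
    have hLeq : L = -Real.log p := by rw [hL, one_div, Real.log_inv]
    have hL2 : 2 ≤ L := by rw [hLeq]; linarith
    have hLpos : 0 < L := by linarith
    set u := 1 / L with hu
    have hu0 : 0 < u := by rw [hu]; positivity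
    have hu2 : u ≤ 1/2 := by
      rw [hu]
      exact one_div_le_one_div_of_le (by norm_num) hL2
    have h1u : 0 < 1 - u := by linarith
    have hul : u * L = 1 := by rw [hu]; field_simp
    set C := Ip p (1 - u) with hC
    -- formula for C
    have hCformula : C = (1-u) * (Real.log (1-u) + L) + u * (Real.log u - Real.log (1-p)) := by
      rw [hC, Ip]
      rw [show (1:ℝ) - (1-u) = u by ring]
      rw [Real.log_div h1u.ne' hp.ne', Real.log_div hu0.ne' h1p.ne']
      rw [show Real.log p = -L by rw [hLeq]; ring]
      ring
    -- bound C ≤ L - 1 + p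
    have hp3 : p ≤ 1/3 := by
      have h3 : (3:ℝ) ≤ Real.exp 2 := by nlinarith [Real.add_one_le_exp (2:ℝ)]
      have : Real.exp (-2:ℝ) ≤ 1/3 := by
        rw [Real.exp_neg]
        rw [inv_le_comm₀ (Real.exp_pos _) (by norm_num)]
        linarith
      linarith
    have hlog1p : -Real.log (1-p) ≤ 2*p := by
      have h := Real.log_le_sub_one_of_pos (show (0:ℝ) < (1-p)⁻¹ by positivity)
      rw [Real.log_inv] at h
      have hinv : (1-p)⁻¹ * (1-p) = 1 := inv_mul_cancel₀ h1p.ne'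
      nlinarith [h, hinv, hp, hp3]
    have hlog1p0 : 0 ≤ -Real.log (1-p) := by
      have := Real.log_nonpos (by linarith) (by linarith : 1 - p ≤ 1)
      linarith
    have hClep : C ≤ L - 1 + p := by
      rw [hCformula]
      have f1 : (1-u) * Real.log (1-u) ≤ 0 :=
        mul_nonpos_of_nonneg_of_nonpos h1u.le (Real.log_nonpos (by linarith) (by linarith))
      have f2 : u * Real.log u ≤ 0 :=
        mul_nonpos_of_nonneg_of_nonpos hu0.le (Real.log_nonpos hu0.le (by linarith))
      have f3 : u * (-Real.log (1-p)) ≤ (1/2) * (2*p) :=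
        mul_le_mul hu2 hlog1p hlog1p0 (by norm_num)
      nlinarith [f1, f2, f3, hul]
    -- endpoint nonnegativity of φ at b = 1 - p
    have hend : 0 ≤ (p+(1-p)) * (Real.log (p+(1-p)) - Real.log p) - (1-p) - C * (1-p)^2 := by
      rw [show p + (1-p) = (1:ℝ) by ring, Real.log_one,
        show Real.log p = -L by rw [hLeq]; ring]
      have h1 : (1-p)^2 ≤ 1 := by nlinarith
      have h2 : (0:ℝ) ≤ (1-p)^2 := sq_nonneg _
      nlinarith [mul_le_mul_of_nonneg_right hClep h2,
        mul_le_mul_of_nonneg_left h1 (show (0:ℝ) ≤ L - 1 + p by linarith)]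
    have hphi := phi_nonneg hp hend x hx0 hxb
    have hIpge := Ip_ge p (p+x) hp hp1 (by linarith) (by linarith)
    have e2 : Real.log ((p+x)/p) = Real.log (p+x) - Real.log p :=
      Real.log_div (by positivity) hp.ne'
    rw [e2] at hIpge
    rw [ge_iff_le]
    nlinarith [hphi, hIpge]
  · -- Part 2
    have hexp1 : Real.exp (-2:ℝ) < 1 := Real.exp_lt_one_iff.2 (by norm_num)
    have hmem : Set.Ioo (0:ℝ) (Real.exp (-2)) ∈ nhdsWithin (0:ℝ) (Set.Ioi 0) :=
      Ioo_mem_nhdsGT_of_mem ⟨le_refl 0, Real.exp_pos _⟩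
    -- basic limit: (log(1/p))⁻¹ → 0⁺
    have hLtop : Tendsto (fun p : ℝ => Real.log (1/p)) (nhdsWithin 0 (Set.Ioi 0)) atTop := by
      have h1 : Tendsto Real.log (nhdsWithin (0:ℝ) (Set.Ioi 0)) atBot :=
        Real.tendsto_log_nhdsGT_zero
      have h2 := tendsto_neg_atBot_atTop.comp h1
      apply h2.congr
      intro p
      simp [one_div, Real.log_inv]
    have hw0 : Tendsto (fun p : ℝ => (Real.log (1/p))⁻¹) (nhdsWithin 0 (Set.Ioi 0)) (nhds 0) :=
      tendsto_inv_atTop_zero.comp hLtop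
    have hwpos : ∀ᶠ p in nhdsWithin (0:ℝ) (Set.Ioi 0), (Real.log (1/p))⁻¹ ∈ Set.Ioi (0:ℝ) := by
      filter_upwards [hmem] with p hp
      have hlogp : Real.log p ≤ -2 := by
        have := (Real.log_le_log_iff hp.1 (Real.exp_pos _)).2 hp.2.le
        rwa [Real.log_exp] at this
      have h2 : (2:ℝ) ≤ Real.log (1/p) := by rw [one_div, Real.log_inv]; linarith
      have : (0:ℝ) < Real.log (1/p) := by linarith
      exact Set.mem_Ioi.2 (by positivity)
    have hw : Tendsto (fun p : ℝ => (Real.log (1/p))⁻¹) (nhdsWithin 0 (Set.Ioi 0))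
        (nhdsWithin 0 (Set.Ioi 0)) := by
      rw [tendsto_nhdsWithin_iff]
      exact ⟨hw0, hwpos⟩
    -- the model function A
    set A : ℝ → ℝ := fun v => (1-v) * (v * Real.log (1-v) + 1) + v^2 * Real.log v with hA
    have hAtend : Tendsto A (nhdsWithin 0 (Set.Ioi 0)) (nhds 1) := by
      have hB : Tendsto (fun v : ℝ => (1-v) * (v * Real.log (1-v) + 1)) (nhds 0) (nhds 1) := by
        have hc : ContinuousAt (fun v : ℝ => (1-v) * (v * Real.log (1-v) + 1)) 0 := by
          apply ContinuousAt.mul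
          · exact continuousAt_const.sub continuousAt_id
          · apply ContinuousAt.add _ continuousAt_const
            apply ContinuousAt.mul continuousAt_id
            exact (Real.continuousAt_log (by norm_num)).comp
              (continuousAt_const.sub continuousAt_id)
        have := hc.tendsto
        norm_num at this
        exact this
      have hsq : Tendsto (fun v : ℝ => v^2 * Real.log v) (nhdsWithin 0 (Set.Ioi 0)) (nhds 0) := by
        have h := tendsto_log_mul_rpow_nhdsGT_zero (show (0:ℝ) < 2 by norm_num)
        apply h.congr'
        filter_upwards [self_mem_nhdsWithin] with v hv
        rw [Set.mem_Ioi] at hv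
        rw [← Real.rpow_natCast v 2]
        push_cast
        ring
      have h := (hB.mono_left nhdsWithin_le_nhds).add hsq
      rw [hA]
      norm_num at h
      exact h
    have hAcomp : Tendsto (fun p : ℝ => A ((Real.log (1/p))⁻¹)) (nhdsWithin 0 (Set.Ioi 0))
        (nhds 1) := hAtend.comp hw
    -- the error term
    have herr : Tendsto (fun p : ℝ => ((Real.log (1/p))⁻¹)^2 * Real.log (1-p))
        (nhdsWithin 0 (Set.Ioi 0)) (nhds 0) := by
      have h1 : Tendsto (fun p : ℝ => ((Real.log (1/p))⁻¹)^2) (nhdsWithin 0 (Set.Ioi 0))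
          (nhds 0) := by
        simpa using hw0.pow 2
      have h2 : Tendsto (fun p : ℝ => Real.log (1-p)) (nhdsWithin 0 (Set.Ioi 0)) (nhds 0) := by
        have hc : ContinuousAt (fun p : ℝ => Real.log (1-p)) 0 :=
          (Real.continuousAt_log (by norm_num)).comp (continuousAt_const.sub continuousAt_id)
        have := hc.tendsto
        norm_num at this
        exact this.mono_left nhdsWithin_le_nhds
      simpa using h1.mul h2
    have hG : Tendsto (fun p : ℝ => A ((Real.log (1/p))⁻¹)
        - ((Real.log (1/p))⁻¹)^2 * Real.log (1-p)) (nhdsWithin 0 (Set.Ioi 0)) (nhds 1) := by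
      simpa using hAcomp.sub herr
    apply hG.congr'
    filter_upwards [hmem] with p hp
    obtain ⟨hp0, hpe⟩ := hp
    have hp1 : p < 1 := lt_trans hpe hexp1
    have h1p : (0:ℝ) < 1 - p := by linarith
    have hlogp : Real.log p ≤ -2 := by
      have := (Real.log_le_log_iff hp0 (Real.exp_pos _)).2 hpe.le
      rwa [Real.log_exp] at this
    set l := Real.log (1/p) with hl
    have hleq : l = -Real.log p := by rw [hl, one_div, Real.log_inv]
    have hl2 : 2 ≤ l := by rw [hleq]; linarith
    have hl0 : l ≠ 0 := by linarith
    have hu0 : 0 < l⁻¹ := by positivity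
    have h1u : 0 < 1 - l⁻¹ := by
      have : l⁻¹ ≤ 1/2 := by
        rw [inv_le_comm₀ (by linarith : (0:ℝ) < l) (by norm_num)]
        linarith
      linarith
    rw [hA]
    simp only [Ip, one_div]
    rw [show (1:ℝ) - (1 - l⁻¹) = l⁻¹ by ring]
    rw [Real.log_div h1u.ne' hp0.ne', Real.log_div hu0.ne' h1p.ne']
    rw [show Real.log p = -l by rw [hleq]; ring]
    field_simp
    ring
end
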